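/- Let S be a commutative p-scheme of order p^4 such that n_{O_θ(S)} = p^2 and n_{O^θ(S)} = p^3. Then the thin radical is contained in the thin residue: O_θ(S) ⊆ O^θ(S). -/

import Mathlib

open Set

/-- The diagonal relation `1_X` on a set `X`. -/
def schemeDiag (X : Type*) : Set (X × X) := {p | p.1 = p.2}

/-- The transpose `s*` of a relation `s`. -/
def schemeTransp {X : Type*} (s : Set (X × X)) : Set (X × X) := {p | (p.2, p.1) ∈ s}

/-- An association scheme on a finite set `X`: a partition of `X × X` containing the
diagonal, closed under transposition, with well-defined intersection numbers `a s t u`. -/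
structure AssocScheme (X : Type*) [Fintype X] where
  rels : Set (Set (X × X))
  partition : ∀ p : X × X, ∃! s, s ∈ rels ∧ p ∈ s
  diag_mem : schemeDiag X ∈ rels
  transpose_mem : ∀ s ∈ rels, schemeTransp s ∈ rels
  a : Set (X × X) → Set (X × X) → Set (X × X) → ℕ
  a_spec : ∀ s ∈ rels, ∀ t ∈ rels, ∀ u ∈ rels, ∀ x y : X, (x, y) ∈ u →
    a s t u = Nat.card {z : X | (x, z) ∈ s ∧ (z, y) ∈ t}

namespace AssocScheme

variable {X : Type*} [Fintype X] (S : AssocScheme X)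

/-- The valency `n_s = a_{s s* 1_X}` of a relation. -/
def val (s : Set (X × X)) : ℕ := S.a s (schemeTransp s) (schemeDiag X)

/-- The complex product `uv` of two relations. -/
def cprod (u v : Set (X × X)) : Set (Set (X × X)) := {s ∈ S.rels | S.a u v s ≠ 0}

/-- The complex product `PQ` of two sets of relations. -/
def sprod (P Q : Set (Set (X × X))) : Set (Set (X × X)) :=
  {s ∈ S.rels | ∃ p ∈ P, ∃ q ∈ Q, S.a p q s ≠ 0}

/-- A (nonempty) closed subset of the scheme. -/
def IsClosedSubset (T : Set (Set (X × X))) : Prop :=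
  T.Nonempty ∧ T ⊆ S.rels ∧ ∀ u ∈ T, ∀ v ∈ T, S.cprod u v ⊆ T

/-- The thin radical `O_θ(S)`: the set of relations of valency 1. -/
def thinRadical : Set (Set (X × X)) := {s ∈ S.rels | S.val s = 1}

/-- The smallest closed subset containing all `t* t` for `t ∈ T`. -/
def resOf (T : Set (Set (X × X))) : Set (Set (X × X)) :=
  ⋂₀ {U | S.IsClosedSubset U ∧ ∀ t ∈ T, S.cprod (schemeTransp t) t ⊆ U}

/-- The thin residue `O^θ(S) = ⟨⋃_{s ∈ S} s* s⟩`. -/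
def thinResidue : Set (Set (X × X)) := S.resOf S.rels

/-- The order `n_U = ∑_{u ∈ U} n_u` of a set of relations. -/
noncomputable def nOrd (U : Set (Set (X × X))) : ℕ := ∑ᶠ u ∈ U, S.val u

/-- Commutativity of the scheme. -/
def IsCommutative : Prop :=
  ∀ u ∈ S.rels, ∀ v ∈ S.rels, ∀ w ∈ S.rels, S.a u v w = S.a v u w

/-- `S` is a `p`-scheme: `|X|` and all valencies are powers of the prime `p`. -/
def IsPScheme (p : ℕ) : Prop :=
  p.Prime ∧ (∃ n, Fintype.card X = p ^ n) ∧ ∀ s ∈ S.rels, ∃ i, S.val s = p ^ i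

/-- `S` is schurian: its relations are the orbitals of a transitive permutation group. -/
def IsSchurian : Prop :=
  ∃ G : Subgroup (Equiv.Perm X), (∀ x y : X, ∃ g ∈ G, g x = y) ∧
    S.rels = {o | ∃ q : X × X, o = {r : X × X | ∃ g ∈ G, (g q.1, g q.2) = r}}

/-- The right stabilizer `R(s) = {t | st = s}`. -/
def Rstab (s : Set (X × X)) : Set (Set (X × X)) := {t ∈ S.rels | S.cprod s t = {s}}

/-- The left stabilizer `L(s) = {t | ts = s}`. -/
def Lstab (s : Set (X × X)) : Set (Set (X × X)) := {t ∈ S.rels | S.cprod t s = {s}}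

/-- A faithful map: `r(x,y) = r(φ x, φ y)` for all `x, y`. -/
def IsFaithful (φ : X → X) : Prop :=
  ∀ x y : X, ∀ s ∈ S.rels, (x, y) ∈ s → (φ x, φ y) ∈ s

/-- An automorphism of the scheme. -/
def IsAutomorphism (φ : X → X) : Prop := Function.Bijective φ ∧ S.IsFaithful φ

/-- The quotient scheme `S // T` is isomorphic to the cyclic group `C_m`:
there is a surjection `f : X → ZMod m` whose difference map classifies the
double-coset relations `T s T`. -/
def QuotIsoCyclic (T : Set (Set (X × X))) (m : ℕ) : Prop :=
  ∃ f : X → ZMod m, Function.Surjective f ∧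
    ∀ x y x' y' : X, (f y - f x = f y' - f x') ↔
      ∃ s ∈ S.rels, (x, y) ∈ s ∧ ∃ s' ∈ S.sprod (S.sprod T {s}) T, (x', y') ∈ s'

/-- A thin closed subset `T` is isomorphic, as a group under the relational
product, to the additive group `G`. -/
def ThinGroupIso (T : Set (Set (X × X))) (G : Type*) [AddGroup G] : Prop :=
  (∀ t ∈ T, S.val t = 1) ∧ ∃ f : Set (X × X) → G, Set.BijOn f T Set.univ ∧
    ∀ t1 ∈ T, ∀ t2 ∈ T, ∀ u, S.cprod t1 t2 = {u} → f u = f t1 + f t2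

end AssocScheme

/-- The set of relations of the wreath product `F ≀ H`. -/
def wreathRels {W Y : Type*} [Fintype W] [Fintype Y]
    (F : AssocScheme W) (H : AssocScheme Y) : Set (Set ((W × Y) × (W × Y))) :=
  {r | ∃ f ∈ F.rels, r = {p : (W × Y) × (W × Y) | p.1.2 = p.2.2 ∧ (p.1.1, p.2.1) ∈ f}} ∪
  {r | ∃ h ∈ H.rels, h ≠ schemeDiag Y ∧
    r = {p : (W × Y) × (W × Y) | (p.1.2, p.2.2) ∈ h}}

namespace AssocScheme

section Dev

set_option linter.unusedSectionVars false

open Classical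

variable {X : Type*} [Fintype X] (S : AssocScheme X) {p : ℕ}

/-! ### Basic partition facts -/

lemma rel_eq_rel {s t : Set (X × X)} {x y : X} (hs : s ∈ S.rels) (ht : t ∈ S.rels)
    (h1 : (x, y) ∈ s) (h2 : (x, y) ∈ t) : s = t := by
  obtain ⟨u, -, hu⟩ := S.partition (x, y)
  rw [hu s ⟨hs, h1⟩, hu t ⟨ht, h2⟩]

noncomputable def relOf (x y : X) : Set (X × X) :=
  Classical.choose (S.partition (x, y)).exists

lemma relOf_mem (x y : X) : S.relOf x y ∈ S.rels :=
  (Classical.choose_spec (S.partition (x, y)).exists).1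

lemma mem_relOf (x y : X) : (x, y) ∈ S.relOf x y :=
  (Classical.choose_spec (S.partition (x, y)).exists).2

lemma eq_relOf {s : Set (X × X)} {x y : X} (hs : s ∈ S.rels) (h : (x, y) ∈ s) :
    s = S.relOf x y :=
  S.rel_eq_rel hs (S.relOf_mem x y) h (S.mem_relOf x y)

/-! ### Transpose basics -/

lemma mem_transp {s : Set (X × X)} {x y : X} : (x, y) ∈ schemeTransp s ↔ (y, x) ∈ s := Iff.rfl

lemma transp_transp (s : Set (X × X)) : schemeTransp (schemeTransp s) = s := rfl

lemma transp_diag : schemeTransp (schemeDiag X) = schemeDiag X := by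
  ext ⟨x, y⟩; simp [schemeTransp, schemeDiag, eq_comm]

lemma mem_diag {x y : X} : (x, y) ∈ schemeDiag X ↔ x = y := Iff.rfl

/-! ### Intersection numbers -/

lemma a_eq_ncard {s t u : Set (X × X)} (hs : s ∈ S.rels) (ht : t ∈ S.rels) (hu : u ∈ S.rels)
    {x y : X} (hxy : (x, y) ∈ u) :
    S.a s t u = ({z : X | (x, z) ∈ s ∧ (z, y) ∈ t}).ncard := by
  rw [S.a_spec s hs t ht u hu x y hxy, Nat.card_coe_set_eq]

lemma a_ne_zero {s t u : Set (X × X)} (hs : s ∈ S.rels) (ht : t ∈ S.rels) (hu : u ∈ S.rels)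
    {x y : X} (hxy : (x, y) ∈ u) {z : X} (h1 : (x, z) ∈ s) (h2 : (z, y) ∈ t) :
    S.a s t u ≠ 0 := by
  rw [S.a_eq_ncard hs ht hu hxy]
  have hne : ({z : X | (x, z) ∈ s ∧ (z, y) ∈ t}).Nonempty := ⟨z, h1, h2⟩
  exact ((Set.ncard_pos (Set.toFinite _)).mpr hne).ne'

lemma relOf_mem_cprod {s t : Set (X × X)} (hs : s ∈ S.rels) (ht : t ∈ S.rels)
    {x z y : X} (h1 : (x, z) ∈ s) (h2 : (z, y) ∈ t) : S.relOf x y ∈ S.cprod s t :=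
  ⟨S.relOf_mem x y, S.a_ne_zero hs ht (S.relOf_mem x y) (S.mem_relOf x y) h1 h2⟩

lemma mem_cprod {s t w : Set (X × X)} (hs : s ∈ S.rels) (ht : t ∈ S.rels)
    {x z y : X} (hw : w ∈ S.rels) (hxy : (x, y) ∈ w) (h1 : (x, z) ∈ s) (h2 : (z, y) ∈ t) :
    w ∈ S.cprod s t := by
  rw [S.eq_relOf hw hxy]; exact S.relOf_mem_cprod hs ht h1 h2

lemma exists_mid {s t w : Set (X × X)} (hs : s ∈ S.rels) (ht : t ∈ S.rels)
    (hw : w ∈ S.cprod s t) {x y : X} (hxy : (x, y) ∈ w) :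
    ∃ z, (x, z) ∈ s ∧ (z, y) ∈ t := by
  have := hw.2
  rw [S.a_eq_ncard hs ht hw.1 hxy] at this
  obtain ⟨z, hz⟩ := Set.nonempty_of_ncard_ne_zero this
  exact ⟨z, hz⟩

lemma cprod_subset_rels {s t : Set (X × X)} : S.cprod s t ⊆ S.rels := fun _ h => h.1

lemma transp_mem_cprod {s t w : Set (X × X)} (hs : s ∈ S.rels) (ht : t ∈ S.rels)
    (hw : w ∈ S.cprod s t) (hne : w.Nonempty) :
    schemeTransp w ∈ S.cprod (schemeTransp t) (schemeTransp s) := by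
  obtain ⟨⟨x, y⟩, hxy⟩ := hne
  obtain ⟨z, h1, h2⟩ := S.exists_mid hs ht hw hxy
  exact S.mem_cprod (S.transpose_mem t ht) (S.transpose_mem s hs)
    (S.transpose_mem w hw.1) (mem_transp.mpr hxy) (mem_transp.mpr h2) (mem_transp.mpr h1)

lemma cprod_comm (hcomm : S.IsCommutative) {s t : Set (X × X)} (hs : s ∈ S.rels)
    (ht : t ∈ S.rels) : S.cprod s t = S.cprod t s := by
  ext u
  constructor <;> intro ⟨hu, ha⟩
  · exact ⟨hu, by rwa [hcomm t ht s hs u hu]⟩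
  · exact ⟨hu, by rwa [hcomm s hs t ht u hu]⟩

/-! ### Valencies and degrees -/

lemma val_eq_ncard {s : Set (X × X)} (hs : s ∈ S.rels) (x : X) :
    S.val s = ({y : X | (x, y) ∈ s}).ncard := by
  have : S.val s = ({z : X | (x, z) ∈ s ∧ (z, x) ∈ schemeTransp s}).ncard :=
    S.a_eq_ncard hs (S.transpose_mem s hs) S.diag_mem (by exact rfl)
  simpa [mem_transp, and_self] using this

lemma val_pos (hp : S.IsPScheme p) {s : Set (X × X)} (hs : s ∈ S.rels) : 0 < S.val s := by
  obtain ⟨i, hi⟩ := hp.2.2 s hs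
  rw [hi]; exact pow_pos hp.1.pos i

lemma exists_edge (hp : S.IsPScheme p) {s : Set (X × X)} (hs : s ∈ S.rels) (x : X) :
    ∃ y, (x, y) ∈ s := by
  have h := S.val_pos hp hs
  rw [S.val_eq_ncard hs x] at h
  obtain ⟨y, hy⟩ := (Set.ncard_pos (Set.toFinite _)).mp h
  exact ⟨y, hy⟩

lemma nonempty_of_pscheme (hp : S.IsPScheme p) : Nonempty X := by
  obtain ⟨n, hn⟩ := hp.2.1
  have : 0 < Fintype.card X := by rw [hn]; exact pow_pos hp.1.pos n
  exact Fintype.card_pos_iff.mp this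

lemma rel_nonempty (hp : S.IsPScheme p) {s : Set (X × X)} (hs : s ∈ S.rels) : s.Nonempty := by
  haveI := S.nonempty_of_pscheme hp
  obtain ⟨y, hy⟩ := S.exists_edge hp hs (Classical.arbitrary X)
  exact ⟨_, hy⟩

lemma diag_mem_cprod (hp : S.IsPScheme p) {s : Set (X × X)} (hs : s ∈ S.rels) :
    schemeDiag X ∈ S.cprod s (schemeTransp s) := by
  obtain ⟨⟨x, y⟩, hxy⟩ := S.rel_nonempty hp hs
  exact S.mem_cprod hs (S.transpose_mem s hs) S.diag_mem (show (x,x) ∈ schemeDiag X from rfl)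
    hxy (mem_transp.mpr hxy)

/-! ### Relational composition -/

def rcomp (A B : Set (X × X)) : Set (X × X) := {q | ∃ z, (q.1, z) ∈ A ∧ (z, q.2) ∈ B}

lemma mem_rcomp {A B : Set (X × X)} {x y : X} :
    (x, y) ∈ rcomp A B ↔ ∃ z, (x, z) ∈ A ∧ (z, y) ∈ B := Iff.rfl

lemma rcomp_assoc (A B C : Set (X × X)) : rcomp (rcomp A B) C = rcomp A (rcomp B C) := by
  ext ⟨x, y⟩
  constructor
  · rintro ⟨z, ⟨m, h1, h2⟩, h3⟩; exact ⟨m, h1, z, h2, h3⟩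
  · rintro ⟨m, h1, z, h2, h3⟩; exact ⟨z, ⟨m, h1, h2⟩, h3⟩

lemma rcomp_diag_left (A : Set (X × X)) : rcomp (schemeDiag X) A = A := by
  ext ⟨x, y⟩
  constructor
  · rintro ⟨z, h1, h2⟩; rwa [show x = z from h1]
  · intro h; exact ⟨x, rfl, h⟩

lemma rcomp_diag_right (A : Set (X × X)) : rcomp A (schemeDiag X) = A := by
  ext ⟨x, y⟩
  constructor
  · rintro ⟨z, h1, h2⟩; rwa [show z = y from h2] at h1
  · intro h; exact ⟨y, h, rfl⟩

lemma cprod_subset_rcomp {s t : Set (X × X)} (hs : s ∈ S.rels) (ht : t ∈ S.rels)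
    {w : Set (X × X)} (hw : w ∈ S.cprod s t) : w ⊆ rcomp s t := by
  rintro ⟨x, y⟩ hxy
  exact S.exists_mid hs ht hw hxy

/-! ### Thin relations -/

def IsThin (s : Set (X × X)) : Prop := s ∈ S.rels ∧ S.val s = 1

noncomputable def tmap (s : Set (X × X)) (x : X) : X :=
  if h : ∃ y, (x, y) ∈ s then h.choose else x

lemma thin_unique {s : Set (X × X)} (h : S.IsThin s) {x y y' : X}
    (h1 : (x, y) ∈ s) (h2 : (x, y') ∈ s) : y = y' := by
  have hc := (S.val_eq_ncard h.1 x).symm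
  rw [h.2] at hc
  obtain ⟨a, ha⟩ := Set.ncard_eq_one.mp hc
  have e1 : y ∈ ({a} : Set X) := ha ▸ h1
  have e2 : y' ∈ ({a} : Set X) := ha ▸ h2
  rw [e1, e2]

lemma tmap_mem (hp : S.IsPScheme p) {s : Set (X × X)} (h : S.IsThin s) (x : X) :
    (x, tmap s x) ∈ s := by
  have he : ∃ y, (x, y) ∈ s := S.exists_edge hp h.1 x
  rw [tmap, dif_pos he]
  exact he.choose_spec

lemma mem_thin_iff (hp : S.IsPScheme p) {s : Set (X × X)} (h : S.IsThin s) {x y : X} :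
    (x, y) ∈ s ↔ y = tmap s x :=
  ⟨fun hxy => S.thin_unique h hxy (S.tmap_mem hp h x), fun hy => hy ▸ S.tmap_mem hp h x⟩

lemma tmap_surjective (hp : S.IsPScheme p) {s : Set (X × X)} (h : S.IsThin s) :
    Function.Surjective (tmap s) := by
  intro y
  obtain ⟨z, hz⟩ := S.exists_edge hp (S.transpose_mem s h.1) y
  exact ⟨z, ((S.mem_thin_iff hp h).mp (mem_transp.mp hz)).symm⟩

lemma tmap_bijective (hp : S.IsPScheme p) {s : Set (X × X)} (h : S.IsThin s) :
    Function.Bijective (tmap s) :=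
  Finite.surjective_iff_bijective.mp (S.tmap_surjective hp h)

lemma transp_thin (hp : S.IsPScheme p) {s : Set (X × X)} (h : S.IsThin s) :
    S.IsThin (schemeTransp s) := by
  refine ⟨S.transpose_mem s h.1, ?_⟩
  obtain ⟨x₀⟩ := S.nonempty_of_pscheme hp
  rw [S.val_eq_ncard (S.transpose_mem s h.1) x₀]
  have h1 : {y : X | (x₀, y) ∈ schemeTransp s} = {y : X | tmap s y = x₀} := by
    ext y; simp only [mem_setOf_eq, mem_transp]
    rw [S.mem_thin_iff hp h, eq_comm]
  obtain ⟨z, hz⟩ := S.tmap_surjective hp h x₀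
  have h2 : {y : X | tmap s y = x₀} = {z} := by
    ext y; simp only [mem_setOf_eq, mem_singleton_iff]
    constructor
    · intro hy; exact (S.tmap_bijective hp h).1 (hy.trans hz.symm)
    · rintro rfl; exact hz
  rw [h1, h2, Set.ncard_singleton]

lemma nbr_rcomp_thin (hp : S.IsPScheme p) {s t : Set (X × X)} (ht : S.IsThin t) (x : X) :
    {y : X | (x, y) ∈ rcomp s t} = tmap t '' {y : X | (x, y) ∈ s} := by
  ext y
  simp only [mem_setOf_eq, mem_rcomp, Set.mem_image]
  constructor
  · rintro ⟨z, h1, h2⟩; exact ⟨z, h1, ((S.mem_thin_iff hp ht).mp h2).symm⟩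
  · rintro ⟨z, h1, rfl⟩; exact ⟨z, h1, S.tmap_mem hp ht z⟩

lemma nbr_ncard_rcomp_thin (hp : S.IsPScheme p) {s t : Set (X × X)} (hs : s ∈ S.rels)
    (ht : S.IsThin t) (x : X) :
    ({y : X | (x, y) ∈ rcomp s t}).ncard = S.val s := by
  rw [S.nbr_rcomp_thin hp ht, Set.ncard_image_of_injective _ (S.tmap_bijective hp ht).1,
    ← S.val_eq_ncard hs x]

lemma rcomp_thin (hp : S.IsPScheme p) {s t : Set (X × X)} (hs : s ∈ S.rels)
    (ht : S.IsThin t) : rcomp s t ∈ S.rels ∧ S.cprod s t = {rcomp s t} := by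
  have key : ∀ w ∈ S.cprod s t, w = rcomp s t := by
    intro w hw
    have hwr : w ∈ S.rels := hw.1
    have hsub : w ⊆ rcomp s t := S.cprod_subset_rcomp hs ht.1 hw
    obtain ⟨⟨x₀, y₀⟩, hxy₀⟩ := S.rel_nonempty hp hwr
    obtain ⟨z₀, hz1, hz2⟩ := S.exists_mid hs ht.1 hw hxy₀
    have hsmem : s ∈ S.cprod w (schemeTransp t) :=
      S.mem_cprod hwr (S.transpose_mem t ht.1) hs hz1 hxy₀ (mem_transp.mpr hz2)
    have hssub : s ⊆ rcomp w (schemeTransp t) :=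
      S.cprod_subset_rcomp hwr (S.transpose_mem t ht.1) hsmem
    have hvw : S.val w ≤ S.val s := by
      obtain ⟨x⟩ := S.nonempty_of_pscheme hp
      rw [S.val_eq_ncard hwr x, ← S.nbr_ncard_rcomp_thin hp hs ht x]
      exact Set.ncard_le_ncard (fun y (hy : (x, y) ∈ w) => hsub hy) (Set.toFinite _)
    have hvs : S.val s ≤ S.val w := by
      obtain ⟨x⟩ := S.nonempty_of_pscheme hp
      rw [S.val_eq_ncard hs x, ← S.nbr_ncard_rcomp_thin hp hwr (S.transp_thin hp ht) x]
      exact Set.ncard_le_ncard (fun y (hy : (x, y) ∈ s) => hssub hy) (Set.toFinite _)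
    have hval : S.val w = S.val s := le_antisymm hvw hvs
    ext ⟨x, y⟩
    constructor
    · exact fun h => hsub h
    · intro h
      have h1 : {y : X | (x, y) ∈ w} = {y : X | (x, y) ∈ rcomp s t} := by
        refine Set.eq_of_subset_of_ncard_le (fun y (hy : (x, y) ∈ w) => hsub hy) ?_
          (Set.toFinite _)
        rw [S.nbr_ncard_rcomp_thin hp hs ht x, ← hval, S.val_eq_ncard hwr x]
      have h2 : y ∈ {y : X | (x, y) ∈ rcomp s t} := h
      rw [← h1] at h2
      exact h2
  obtain ⟨⟨x₀, z₀⟩, hz₀⟩ := S.rel_nonempty hp hs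
  have hmem : S.relOf x₀ (tmap t z₀) ∈ S.cprod s t :=
    S.relOf_mem_cprod hs ht.1 hz₀ (S.tmap_mem hp ht z₀)
  have hre := key _ hmem
  constructor
  · rw [← hre]; exact S.relOf_mem _ _
  · ext w
    constructor
    · intro hw; exact key w hw
    · rintro rfl; rw [← hre]; exact hmem

lemma rcomp_mem_rels (hp : S.IsPScheme p) {s t : Set (X × X)} (hs : s ∈ S.rels)
    (ht : S.IsThin t) : rcomp s t ∈ S.rels := (S.rcomp_thin hp hs ht).1

lemma mem_cprod_rcomp (hp : S.IsPScheme p) {s t : Set (X × X)} (hs : s ∈ S.rels)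
    (ht : S.IsThin t) : rcomp s t ∈ S.cprod s t := by
  rw [(S.rcomp_thin hp hs ht).2]; rfl

lemma rcomp_thin_thin (hp : S.IsPScheme p) {s t : Set (X × X)} (hs : S.IsThin s)
    (ht : S.IsThin t) : S.IsThin (rcomp s t) := by
  refine ⟨S.rcomp_mem_rels hp hs.1 ht, ?_⟩
  obtain ⟨x⟩ := S.nonempty_of_pscheme hp
  rw [S.val_eq_ncard (S.rcomp_mem_rels hp hs.1 ht) x, S.nbr_ncard_rcomp_thin hp hs.1 ht x, hs.2]

lemma rcomp_transp_self (hp : S.IsPScheme p) {t : Set (X × X)} (ht : S.IsThin t) :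
    rcomp (schemeTransp t) t = schemeDiag X := by
  ext ⟨x, y⟩
  constructor
  · rintro ⟨z, h1, h2⟩
    exact S.thin_unique ht (mem_transp.mp h1) h2
  · rintro (rfl : x = y)
    obtain ⟨z, hz⟩ := S.tmap_surjective hp ht x
    exact ⟨z, mem_transp.mpr (hz ▸ S.tmap_mem hp ht z), hz ▸ S.tmap_mem hp ht z⟩

lemma rcomp_self_transp (hp : S.IsPScheme p) {t : Set (X × X)} (ht : S.IsThin t) :
    rcomp t (schemeTransp t) = schemeDiag X := by
  have := S.rcomp_transp_self hp (S.transp_thin hp ht)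
  rwa [transp_transp] at this

lemma rcomp_left_thin (hp : S.IsPScheme p) (hcomm : S.IsCommutative) {s t : Set (X × X)}
    (hs : s ∈ S.rels) (ht : S.IsThin t) : rcomp t s = rcomp s t := by
  have h1 : rcomp s t ∈ S.cprod t s := by
    rw [S.cprod_comm hcomm ht.1 hs]; exact S.mem_cprod_rcomp hp hs ht
  have hsub : rcomp s t ⊆ rcomp t s := S.cprod_subset_rcomp ht.1 hs h1
  symm
  ext ⟨x, y⟩
  constructor
  · exact fun h => hsub h
  · intro h
    have e1 : {y : X | (x, y) ∈ rcomp t s} = {y : X | (tmap t x, y) ∈ s} := by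
      ext y; simp only [mem_setOf_eq, mem_rcomp]
      constructor
      · rintro ⟨z, hz1, hz2⟩; rwa [(S.mem_thin_iff hp ht).mp hz1] at hz2
      · intro hy; exact ⟨tmap t x, S.tmap_mem hp ht x, hy⟩
    have hset : {y : X | (x, y) ∈ rcomp s t} = {y : X | (x, y) ∈ rcomp t s} := by
      refine Set.eq_of_subset_of_ncard_le (fun y (hy : (x, y) ∈ rcomp s t) => hsub hy) ?_
        (Set.toFinite _)
      rw [e1, S.nbr_ncard_rcomp_thin hp hs ht x, ← S.val_eq_ncard hs (tmap t x)]
    have h2 : y ∈ {y : X | (x, y) ∈ rcomp t s} := h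
    rw [← hset] at h2
    exact h2

lemma thin_faithful (hp : S.IsPScheme p) (hcomm : S.IsCommutative) {t r : Set (X × X)}
    (ht : S.IsThin t) (hr : r ∈ S.rels) {x y : X} (hxy : (x, y) ∈ r) :
    (tmap t x, tmap t y) ∈ r := by
  have key : rcomp (schemeTransp t) (rcomp r t) = r := by
    rw [S.rcomp_left_thin hp hcomm (S.rcomp_mem_rels hp hr ht) (S.transp_thin hp ht),
      rcomp_assoc, S.rcomp_self_transp hp ht, rcomp_diag_right]
  rw [← key]
  exact ⟨x, mem_transp.mpr (S.tmap_mem hp ht x), y, hxy, S.tmap_mem hp ht y⟩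

lemma diag_thin (hp : S.IsPScheme p) : S.IsThin (schemeDiag X) := by
  refine ⟨S.diag_mem, ?_⟩
  obtain ⟨x⟩ := S.nonempty_of_pscheme hp
  rw [S.val_eq_ncard S.diag_mem x]
  have h1 : {y : X | (x, y) ∈ schemeDiag X} = {x} := by
    ext y; simp [mem_diag, eq_comm]
  rw [h1, Set.ncard_singleton]

/-! ### Counting helpers -/

lemma ncard_biUnion_eq {α ι : Type*} [Finite α] (F : Finset ι) (f : ι → Set α)
    (hd : ∀ i ∈ F, ∀ j ∈ F, i ≠ j → Disjoint (f i) (f j)) :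
    (⋃ i ∈ F, f i).ncard = ∑ i ∈ F, (f i).ncard := by
  classical
  induction F using Finset.induction_on with
  | empty => simp
  | @insert a F ha ih =>
    rw [Finset.set_biUnion_insert, Finset.sum_insert ha,
      Set.ncard_union_eq ?_ (Set.toFinite _) (Set.toFinite _),
      ih (fun i hi j hj hij => hd i (Finset.mem_insert_of_mem hi) j
        (Finset.mem_insert_of_mem hj) hij)]
    rw [Set.disjoint_iUnion_right]
    intro i
    rw [Set.disjoint_iUnion_right]
    intro hi
    exact hd a (Finset.mem_insert_self a F) i (Finset.mem_insert_of_mem hi)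
      (fun h => ha (h ▸ hi))

/-- Counting along a setoid with constant fibre size over a set. -/
lemma ncard_eq_mul_image {α : Type*} [Finite α] (sd : Setoid α) (Z : Set α) (k : ℕ)
    (hfib : ∀ z ∈ Z, ({z' ∈ Z | sd.r z z'}).ncard = k) :
    Z.ncard = k * (Quotient.mk sd '' Z).ncard := by
  classical
  haveI : Finite (Quotient sd) := Quotient.finite sd
  have hQ : (Quotient.mk sd '' Z).Finite := Set.toFinite _
  have hcover : Z = ⋃ c ∈ hQ.toFinset, {z ∈ Z | Quotient.mk sd z = c} := by
    ext z
    simp only [Set.mem_iUnion, Set.mem_setOf_eq, Set.Finite.mem_toFinset]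
    constructor
    · intro hz; exact ⟨Quotient.mk sd z, ⟨z, hz, rfl⟩, hz, rfl⟩
    · rintro ⟨c, -, hz, -⟩; exact hz
  have hdisj : ∀ c ∈ hQ.toFinset, ∀ c' ∈ hQ.toFinset, c ≠ c' →
      Disjoint {z ∈ Z | Quotient.mk sd z = c} {z ∈ Z | Quotient.mk sd z = c'} := by
    intro c _ c' _ hne
    rw [Set.disjoint_left]
    rintro z ⟨-, rfl⟩ ⟨-, rfl⟩
    exact hne rfl
  have hcard : ∀ c ∈ hQ.toFinset, ({z ∈ Z | Quotient.mk sd z = c}).ncard = k := by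
    intro c hc
    rw [Set.Finite.mem_toFinset] at hc
    obtain ⟨z₀, hz₀, rfl⟩ := hc
    have : {z ∈ Z | Quotient.mk sd z = Quotient.mk sd z₀} = {z' ∈ Z | sd.r z₀ z'} := by
      ext z
      simp only [Set.mem_setOf_eq, and_congr_right_iff]
      intro _
      rw [Quotient.eq]
      exact ⟨fun h => sd.symm h, fun h => sd.symm h⟩
    rw [this, hfib z₀ hz₀]
  conv_lhs => rw [hcover]
  rw [ncard_biUnion_eq _ _ hdisj, Finset.sum_congr rfl hcard,
    Finset.sum_const, smul_eq_mul, mul_comm]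
  congr 1
  exact (Set.ncard_eq_toFinset_card _ hQ).symm

/-! ### Closed subsets -/

def GoodClosed (T : Set (Set (X × X))) : Prop :=
  T ⊆ S.rels ∧ schemeDiag X ∈ T ∧ (∀ t ∈ T, schemeTransp t ∈ T) ∧
    ∀ u ∈ T, ∀ v ∈ T, S.cprod u v ⊆ T

lemma GoodClosed.isClosedSubset {T : Set (Set (X × X))} (h : S.GoodClosed T) :
    S.IsClosedSubset T := ⟨⟨_, h.2.1⟩, h.1, h.2.2.2⟩

lemma good_rels : S.GoodClosed S.rels :=
  ⟨le_refl _, S.diag_mem, S.transpose_mem, fun _ _ _ _ => S.cprod_subset_rels⟩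

lemma good_singleton_diag (hp : S.IsPScheme p) : S.GoodClosed {schemeDiag X} := by
  refine ⟨Set.singleton_subset_iff.mpr S.diag_mem, rfl, ?_, ?_⟩
  · rintro t (rfl : t = schemeDiag X)
    rw [transp_diag]; rfl
  rintro u rfl v rfl w hw
  obtain ⟨⟨x, y⟩, hxy⟩ := S.rel_nonempty hp hw.1
  obtain ⟨z, h1, h2⟩ := S.exists_mid S.diag_mem S.diag_mem hw hxy
  have : (x, y) ∈ schemeDiag X := ((h1 : x = z).trans (h2 : z = y) : x = y)
  exact (S.rel_eq_rel hw.1 S.diag_mem hxy this : w = schemeDiag X)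

/-- The coset equivalence attached to a good closed subset. -/
def csetoid (T : Set (Set (X × X))) (hT : S.GoodClosed T) : Setoid X where
  r x y := S.relOf x y ∈ T
  iseqv := by
    constructor
    · intro x
      have : schemeDiag X = S.relOf x x := S.eq_relOf S.diag_mem rfl
      rw [← this]; exact hT.2.1
    · intro x y h
      have : schemeTransp (S.relOf x y) = S.relOf y x :=
        S.eq_relOf (S.transpose_mem _ (S.relOf_mem x y)) (mem_transp.mpr (S.mem_relOf x y))
      rw [← this]; exact hT.2.2.1 _ h
    · intro x y z h1 h2
      exact hT.2.2.2 _ h1 _ h2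
        (S.relOf_mem_cprod (S.relOf_mem x y) (S.relOf_mem y z)
          (S.mem_relOf x y) (S.mem_relOf y z))

lemma csetoid_iff {T : Set (Set (X × X))} (hT : S.GoodClosed T) {x y : X} :
    (S.csetoid T hT).r x y ↔ ∃ t ∈ T, (x, y) ∈ t := by
  constructor
  · intro h; exact ⟨_, h, S.mem_relOf x y⟩
  · rintro ⟨t, ht, hxy⟩
    have : t = S.relOf x y := S.eq_relOf (hT.1 ht) hxy
    rwa [this] at ht

/-! ### Orders of subsets -/

lemma nOrd_eq_sum (T : Set (Set (X × X))) :
    S.nOrd T = ∑ u ∈ (Set.toFinite T).toFinset, S.val u := by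
  rw [nOrd, ← finsum_mem_coe_finset, Set.Finite.coe_toFinset]

lemma class_ncard {T : Set (Set (X × X))} (hT : T ⊆ S.rels) (x : X) :
    ({y : X | S.relOf x y ∈ T}).ncard = S.nOrd T := by
  have hcover : {y : X | S.relOf x y ∈ T} =
      ⋃ t ∈ (Set.toFinite T).toFinset, {y : X | (x, y) ∈ t} := by
    ext y
    simp only [Set.mem_iUnion, Set.mem_setOf_eq, Set.Finite.mem_toFinset]
    constructor
    · intro h; exact ⟨S.relOf x y, h, S.mem_relOf x y⟩
    · rintro ⟨t, ht, hxy⟩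
      have : t = S.relOf x y := S.eq_relOf (hT ht) hxy
      rwa [this] at ht
  have hdisj : ∀ t ∈ (Set.toFinite T).toFinset, ∀ t' ∈ (Set.toFinite T).toFinset, t ≠ t' →
      Disjoint {y : X | (x, y) ∈ t} {y : X | (x, y) ∈ t'} := by
    intro t ht t' ht' hne
    rw [Set.Finite.mem_toFinset] at ht ht'
    rw [Set.disjoint_left]
    intro y hy hy'
    exact hne (S.rel_eq_rel (hT ht) (hT ht') hy hy')
  rw [hcover, ncard_biUnion_eq _ _ hdisj, nOrd_eq_sum]
  exact Finset.sum_congr rfl fun t ht =>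
    (S.val_eq_ncard (hT ((Set.Finite.mem_toFinset _).mp ht)) x).symm

lemma card_eq_nOrd_mul {T : Set (Set (X × X))} (hT : S.GoodClosed T) :
    Nat.card X = S.nOrd T * Nat.card (Quotient (S.csetoid T hT)) := by
  have := ncard_eq_mul_image (S.csetoid T hT) Set.univ (S.nOrd T) ?_
  · rw [Set.ncard_univ] at this
    rw [this]
    congr 1
    rw [Set.image_univ, Set.range_eq_univ.mpr (Quotient.mk''_surjective),
      Set.ncard_univ]
  · intro z _
    have : {z' ∈ Set.univ | (S.csetoid T hT).r z z'} = {y : X | S.relOf z y ∈ T} := by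
      ext y; simp only [Set.mem_setOf_eq, Set.mem_univ, true_and]; rfl
    rw [this, S.class_ncard hT.1 z]

lemma nOrd_dvd_card {T : Set (Set (X × X))} (hT : S.GoodClosed T) :
    S.nOrd T ∣ Nat.card X :=
  ⟨_, S.card_eq_nOrd_mul hT⟩

lemma nOrd_pow {T : Set (Set (X × X))} (hp : S.IsPScheme p) (hT : S.GoodClosed T) :
    ∃ m, S.nOrd T = p ^ m := by
  obtain ⟨n, hn⟩ := hp.2.1
  have hdvd : S.nOrd T ∣ p ^ n := by
    rw [← hn, ← Nat.card_eq_fintype_card]; exact S.nOrd_dvd_card hT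
  obtain ⟨m, -, hm⟩ := (Nat.dvd_prime_pow hp.1).mp hdvd
  exact ⟨m, hm⟩

lemma nOrd_mono (hp : S.IsPScheme p) {U V : Set (Set (X × X))} (hUV : U ⊆ V)
    (hV : V ⊆ S.rels) : S.nOrd U ≤ S.nOrd V := by
  rw [nOrd_eq_sum, nOrd_eq_sum]
  apply Finset.sum_le_sum_of_subset_of_nonneg
  · intro u hu
    rw [Set.Finite.mem_toFinset] at hu ⊢
    exact hUV hu
  · intro _ _ _; exact Nat.zero_le _

lemma nOrd_lt (hp : S.IsPScheme p) {U V : Set (Set (X × X))} (hUV : U ⊆ V)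
    (hV : V ⊆ S.rels) {v₀ : Set (X × X)} (hv₀ : v₀ ∈ V) (hv₀' : v₀ ∉ U) :
    S.nOrd U < S.nOrd V := by
  rw [nOrd_eq_sum, nOrd_eq_sum]
  apply Finset.sum_lt_sum_of_subset
  · intro u hu
    rw [Set.Finite.mem_toFinset] at hu ⊢
    exact hUV hu
  · exact (Set.Finite.mem_toFinset _).mpr hv₀
  · rw [Set.Finite.mem_toFinset]; exact hv₀'
  · exact S.val_pos hp (hV hv₀)
  · intro _ _ _; exact Nat.zero_le _

lemma nOrd_singleton_diag (hp : S.IsPScheme p) : S.nOrd {schemeDiag X} = 1 := by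
  rw [nOrd_eq_sum]
  have : (Set.toFinite ({schemeDiag X} : Set (Set (X × X)))).toFinset = {schemeDiag X} := by
    ext u
    rw [Set.Finite.mem_toFinset, Finset.mem_singleton]
    exact Iff.rfl
  rw [this, Finset.sum_singleton, (S.diag_thin hp).2]

lemma nOrd_pos (hp : S.IsPScheme p) {T : Set (Set (X × X))} (hT : S.GoodClosed T) :
    0 < S.nOrd T := by
  have h0 : S.nOrd ∅ = 0 := by
    rw [nOrd_eq_sum]
    have he : (Set.toFinite (∅ : Set (Set (X × X)))).toFinset = ∅ :=
      Set.Finite.toFinset_eq_empty.mpr rfl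
    rw [he, Finset.sum_empty]
  have := S.nOrd_lt hp (Set.empty_subset T) hT.1 hT.2.1 (Set.notMem_empty _)
  omega

/-! ### The thin residue is a good closed subset -/

lemma rels_mem_resFam (T : Set (Set (X × X))) :
    S.rels ∈ {U | S.IsClosedSubset U ∧ ∀ t ∈ T, S.cprod (schemeTransp t) t ⊆ U} :=
  ⟨⟨⟨_, S.diag_mem⟩, le_refl _, fun _ _ _ _ => S.cprod_subset_rels⟩,
    fun _ _ => S.cprod_subset_rels⟩

lemma diag_mem_cprod_diag (hp : S.IsPScheme p) :
    schemeDiag X ∈ S.cprod (schemeTransp (schemeDiag X)) (schemeDiag X) := by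
  obtain ⟨x⟩ := S.nonempty_of_pscheme hp
  rw [transp_diag]
  exact S.mem_cprod S.diag_mem S.diag_mem S.diag_mem (show (x, x) ∈ schemeDiag X from rfl)
    rfl rfl

lemma diag_mem_resOf (hp : S.IsPScheme p) {T : Set (Set (X × X))}
    (hdT : schemeDiag X ∈ T) : schemeDiag X ∈ S.resOf T := by
  intro U hU
  exact hU.2 _ hdT (S.diag_mem_cprod_diag hp)

lemma resOf_subset_rels (T : Set (Set (X × X))) : S.resOf T ⊆ S.rels :=
  Set.sInter_subset_of_mem (S.rels_mem_resFam T)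

lemma resOf_closed_prod {T : Set (Set (X × X))} {u v : Set (X × X)}
    (hu : u ∈ S.resOf T) (hv : v ∈ S.resOf T) : S.cprod u v ⊆ S.resOf T := by
  intro w hw
  intro U hU
  exact hU.1.2.2 u (hu U hU) v (hv U hU) hw

lemma squares_subset_resOf {T : Set (Set (X × X))} {t : Set (X × X)} (ht : t ∈ T) :
    S.cprod (schemeTransp t) t ⊆ S.resOf T := by
  intro w hw U hU
  exact hU.2 t ht hw

lemma thinResidue_good (hp : S.IsPScheme p) : S.GoodClosed S.thinResidue := by
  refine ⟨S.resOf_subset_rels _, S.diag_mem_resOf hp S.diag_mem, ?_, ?_⟩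
  · -- closed under transposition
    intro w hw U hU
    set U' : Set (Set (X × X)) := {v | schemeTransp v ∈ U} with hU'def
    have hU' : U' ∈ {V | S.IsClosedSubset V ∧ ∀ t ∈ S.rels, S.cprod (schemeTransp t) t ⊆ V} := by
      constructor
      · refine ⟨⟨schemeDiag X, ?_⟩, ?_, ?_⟩
        · show schemeTransp (schemeDiag X) ∈ U
          rw [transp_diag]
          exact hU.2 _ S.diag_mem (S.diag_mem_cprod_diag hp)
        · intro v hv
          have : schemeTransp v ∈ S.rels := hU.1.2.1 hv
          have h2 := S.transpose_mem _ this
          rwa [transp_transp] at h2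
        · intro a ha b hb x hx
          have har : a ∈ S.rels := by
            have : schemeTransp a ∈ S.rels := hU.1.2.1 ha
            have h2 := S.transpose_mem _ this
            rwa [transp_transp] at h2
          have hbr : b ∈ S.rels := by
            have : schemeTransp b ∈ S.rels := hU.1.2.1 hb
            have h2 := S.transpose_mem _ this
            rwa [transp_transp] at h2
          show schemeTransp x ∈ U
          have hxne : x.Nonempty := S.rel_nonempty hp hx.1
          exact hU.1.2.2 _ hb _ ha (S.transp_mem_cprod har hbr hx hxne)
      · intro t ht w' hw'
        show schemeTransp w' ∈ U
        have hw'ne : w'.Nonempty := S.rel_nonempty hp hw'.1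
        have := S.transp_mem_cprod (S.transpose_mem t ht) ht hw' hw'ne
        rw [transp_transp] at this
        exact hU.2 t ht this
    exact hw U' hU'
  · intro u hu v hv
    exact S.resOf_closed_prod hu hv

lemma squares_subset_thinResidue {u : Set (X × X)} (hu : u ∈ S.rels) :
    S.cprod (schemeTransp u) u ⊆ S.thinResidue :=
  S.squares_subset_resOf hu

/-! ### Coset maps induced by relations -/

section CosetMaps

variable {T : Set (Set (X × X))} (hT : S.GoodClosed T)

lemma mapsTo_unique (hp : S.IsPScheme p) (hcomm : S.IsCommutative)
    (hsq : ∀ u ∈ S.rels, S.cprod (schemeTransp u) u ⊆ T)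
    {u : Set (X × X)} (hu : u ∈ S.rels) {x x' y y' : X}
    (hxx' : (S.csetoid T hT).r x x') (hxy : (x, y) ∈ u) (hx'y' : (x', y') ∈ u) :
    (S.csetoid T hT).r y y' := by
  have htT : S.relOf x x' ∈ T := hxx'
  have htr : S.relOf x x' ∈ S.rels := hT.1 htT
  have hr1 : S.relOf x y' ∈ S.cprod (S.relOf x x') u :=
    S.relOf_mem_cprod htr hu (S.mem_relOf x x') hx'y'
  rw [S.cprod_comm hcomm htr hu] at hr1
  obtain ⟨z, hz1, hz2⟩ := S.exists_mid hu htr hr1 (S.mem_relOf x y')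
  have hv : S.relOf y z ∈ S.cprod (schemeTransp u) u :=
    S.relOf_mem_cprod (S.transpose_mem u hu) hu (mem_transp.mpr hxy) hz1
  have hvT : S.relOf y z ∈ T := hsq u hu hv
  have hw : S.relOf y y' ∈ S.cprod (S.relOf y z) (S.relOf x x') :=
    S.relOf_mem_cprod (hT.1 hvT) htr (S.mem_relOf y z) hz2
  exact hT.2.2.2 _ hvT _ htT hw

noncomputable def cmap (T : Set (Set (X × X))) (hT : S.GoodClosed T) (u : Set (X × X))
    (c : Quotient (S.csetoid T hT)) : Quotient (S.csetoid T hT) :=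
  if h : ∃ c', ∃ x y, Quotient.mk (S.csetoid T hT) x = c ∧
      Quotient.mk (S.csetoid T hT) y = c' ∧ (x, y) ∈ u then h.choose else c

lemma cmap_eq (hp : S.IsPScheme p) (hcomm : S.IsCommutative)
    (hsq : ∀ u ∈ S.rels, S.cprod (schemeTransp u) u ⊆ T)
    {u : Set (X × X)} (hu : u ∈ S.rels) {x y : X} (hxy : (x, y) ∈ u) :
    S.cmap T hT u (Quotient.mk _ x) = Quotient.mk _ y := by
  have h : ∃ c', ∃ a b, Quotient.mk (S.csetoid T hT) a = Quotient.mk (S.csetoid T hT) x ∧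
      Quotient.mk (S.csetoid T hT) b = c' ∧ (a, b) ∈ u :=
    ⟨Quotient.mk _ y, x, y, rfl, rfl, hxy⟩
  rw [cmap, dif_pos h]
  obtain ⟨a, b, hax, hb, hab⟩ := h.choose_spec
  rw [← hb]
  have hra : (S.csetoid T hT).r a x := Quotient.eq.mp hax
  have hr : (S.csetoid T hT).r b y :=
    S.mapsTo_unique hT hp hcomm hsq hu hra hab hxy
  exact Quotient.sound hr

lemma cmap_exists (hp : S.IsPScheme p) (hcomm : S.IsCommutative)
    (hsq : ∀ u ∈ S.rels, S.cprod (schemeTransp u) u ⊆ T)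
    {u : Set (X × X)} (hu : u ∈ S.rels) (c : Quotient (S.csetoid T hT)) :
    ∃ x y, Quotient.mk (S.csetoid T hT) x = c ∧ (x, y) ∈ u ∧
      S.cmap T hT u c = Quotient.mk _ y := by
  obtain ⟨x, rfl⟩ := Quotient.exists_rep c
  obtain ⟨y, hy⟩ := S.exists_edge hp hu x
  exact ⟨x, y, rfl, hy, S.cmap_eq hT hp hcomm hsq hu hy⟩

lemma cmap_comp (hp : S.IsPScheme p) (hcomm : S.IsCommutative)
    (hsq : ∀ u ∈ S.rels, S.cprod (schemeTransp u) u ⊆ T)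
    {u v w : Set (X × X)} (hu : u ∈ S.rels) (hv : v ∈ S.rels) (hw : w ∈ S.cprod u v)
    (c : Quotient (S.csetoid T hT)) :
    S.cmap T hT w c = S.cmap T hT v (S.cmap T hT u c) := by
  obtain ⟨x, rfl⟩ := Quotient.exists_rep c
  obtain ⟨y, hy⟩ := S.exists_edge hp hw.1 x
  obtain ⟨z, hz1, hz2⟩ := S.exists_mid hu hv hw hy
  rw [S.cmap_eq hT hp hcomm hsq hw.1 hy, S.cmap_eq hT hp hcomm hsq hu hz1,
    S.cmap_eq hT hp hcomm hsq hv hz2]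

lemma cmap_injective (hp : S.IsPScheme p) (hcomm : S.IsCommutative)
    (hsq : ∀ u ∈ S.rels, S.cprod (schemeTransp u) u ⊆ T)
    {u : Set (X × X)} (hu : u ∈ S.rels) :
    Function.Injective (S.cmap T hT u) := by
  intro c₁ c₂ hc
  obtain ⟨x₁, y₁, he₁, hxy₁, hc₁⟩ := S.cmap_exists hT hp hcomm hsq hu c₁
  obtain ⟨x₂, y₂, he₂, hxy₂, hc₂⟩ := S.cmap_exists hT hp hcomm hsq hu c₂
  have hy : (S.csetoid T hT).r y₁ y₂ := by
    rw [hc₁, hc₂] at hc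
    exact Quotient.eq.mp hc
  have hx : (S.csetoid T hT).r x₁ x₂ :=
    S.mapsTo_unique hT hp hcomm hsq (S.transpose_mem u hu) hy
      (mem_transp.mpr hxy₁) (mem_transp.mpr hxy₂)
  rw [← he₁, ← he₂]
  exact Quotient.sound hx

lemma cmap_of_memT (hp : S.IsPScheme p) (hcomm : S.IsCommutative)
    (hsq : ∀ u ∈ S.rels, S.cprod (schemeTransp u) u ⊆ T)
    {t : Set (X × X)} (ht : t ∈ T) (c : Quotient (S.csetoid T hT)) :
    S.cmap T hT t c = c := by
  obtain ⟨x, y, he, hxy, hc⟩ := S.cmap_exists hT hp hcomm hsq (hT.1 ht) c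
  rw [hc, ← he]
  exact Quotient.sound ((S.csetoid T hT).iseqv.symm ((S.csetoid_iff hT).mpr ⟨t, ht, hxy⟩))

end CosetMaps

/-! ### Iterates -/

lemma exists_iterate_eq_id {Q : Type*} [Finite Q] {f : Q → Q} (hf : Function.Injective f) :
    ∃ k, 0 < k ∧ f^[k] = id := by
  obtain ⟨a, b, hab, he⟩ := Finite.exists_ne_map_eq_of_infinite (fun n : ℕ => f^[n])
  wlog hlt : a < b generalizing a b
  · exact this b a (Ne.symm hab) he.symm (by omega)
  refine ⟨b - a, by omega, ?_⟩
  funext x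
  have h1 : f^[a] (f^[b - a] x) = f^[a] x := by
    rw [← Function.iterate_add_apply, Nat.add_sub_cancel' hlt.le]
    exact congrFun he.symm x
  exact (hf.iterate a) h1

/-! ### Powers of a thin relation -/

def spow (s : Set (X × X)) : ℕ → Set (X × X)
  | 0 => schemeDiag X
  | (i + 1) => rcomp (spow s i) s

lemma spow_thin (hp : S.IsPScheme p) {s : Set (X × X)} (hs : S.IsThin s) (i : ℕ) :
    S.IsThin (spow s i) := by
  induction i with
  | zero => exact S.diag_thin hp
  | succ i ih => exact S.rcomp_thin_thin hp ih hs

lemma spow_edge (hp : S.IsPScheme p) {s : Set (X × X)} (hs : S.IsThin s) (i : ℕ) (x : X) :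
    (x, (tmap s)^[i] x) ∈ spow s i := by
  induction i with
  | zero => rfl
  | succ i ih =>
    rw [Function.iterate_succ_apply']
    exact ⟨(tmap s)^[i] x, ih, S.tmap_mem hp hs _⟩

section CosetMaps2

variable {T : Set (Set (X × X))} (hT : S.GoodClosed T)

lemma cmap_spow (hp : S.IsPScheme p) (hcomm : S.IsCommutative)
    (hsq : ∀ u ∈ S.rels, S.cprod (schemeTransp u) u ⊆ T)
    {s : Set (X × X)} (hs : S.IsThin s) (i : ℕ) (c : Quotient (S.csetoid T hT)) :
    S.cmap T hT (spow s i) c = (S.cmap T hT s)^[i] c := by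
  induction i with
  | zero => exact S.cmap_of_memT hT hp hcomm hsq hT.2.1 c
  | succ i ih =>
    have hmem : spow s (i + 1) ∈ S.cprod (spow s i) s :=
      S.mem_cprod_rcomp hp (S.spow_thin hp hs i).1 hs
    rw [show spow s (i+1) = rcomp (spow s i) s from rfl] at *
    rw [S.cmap_comp hT hp hcomm hsq (S.spow_thin hp hs i).1 hs.1 hmem c, ih,
      Function.iterate_succ_apply']

lemma cmap_transitive (hp : S.IsPScheme p) (hcomm : S.IsCommutative)
    (hsq : ∀ u ∈ S.rels, S.cprod (schemeTransp u) u ⊆ T)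
    {s : Set (X × X)} (hs : S.IsThin s) (hsT : s ∉ T)
    (hQ : Nat.card (Quotient (S.csetoid T hT)) = p) (c c' : Quotient (S.csetoid T hT)) :
    ∃ i, (S.cmap T hT s)^[i] c = c' := by
  classical
  haveI : Finite (Quotient (S.csetoid T hT)) := Quotient.finite _
  set f := S.cmap T hT s with hfdef
  have hfinj : Function.Injective f := S.cmap_injective hT hp hcomm hsq hs.1
  obtain ⟨k, hk0, hk⟩ := exists_iterate_eq_id hfinj
  have hQpos : 0 < Nat.card (Quotient (S.csetoid T hT)) := by rw [hQ]; exact hp.1.pos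
  haveI hQne : Nonempty (Quotient (S.csetoid T hT)) := (Nat.card_pos_iff.mp hQpos).1
  -- the orbit setoid
  have hsymm : ∀ {a b : Quotient (S.csetoid T hT)}, (∃ i, f^[i] a = b) → ∃ i, f^[i] b = a := by
    rintro a b ⟨i, rfl⟩
    refine ⟨i * (k - 1), ?_⟩
    rw [← Function.iterate_add_apply, ← Nat.mul_succ, Nat.succ_eq_add_one,
      Nat.sub_add_cancel hk0, mul_comm, Function.iterate_mul, hk]
    simp
  set sd2 : Setoid (Quotient (S.csetoid T hT)) := ⟨fun a b => ∃ i, f^[i] a = b,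
    ⟨fun a => ⟨0, rfl⟩, hsymm, by
      rintro a b c ⟨i, rfl⟩ ⟨j, rfl⟩
      exact ⟨j + i, Function.iterate_add_apply f j i a⟩⟩⟩ with hsd2
  -- transporting orbits
  have hcmaps : ∀ a b : Quotient (S.csetoid T hT), ∃ u ∈ S.rels, S.cmap T hT u a = b := by
    intro a b
    obtain ⟨x, rfl⟩ := Quotient.exists_rep a
    obtain ⟨y, rfl⟩ := Quotient.exists_rep b
    exact ⟨S.relOf x y, S.relOf_mem x y,
      S.cmap_eq hT hp hcomm hsq (S.relOf_mem x y) (S.mem_relOf x y)⟩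
  have hcommute : ∀ u ∈ S.rels, ∀ a : Quotient (S.csetoid T hT), f (S.cmap T hT u a) = S.cmap T hT u (f a) := by
    intro u hu a
    have h1 : rcomp u s ∈ S.cprod u s := S.mem_cprod_rcomp hp hu hs
    have h2 : rcomp u s ∈ S.cprod s u := by
      rw [S.cprod_comm hcomm hs.1 hu]; exact h1
    show S.cmap T hT s (S.cmap T hT u a) = S.cmap T hT u (S.cmap T hT s a)
    rw [← S.cmap_comp hT hp hcomm hsq hu hs.1 h1 a,
      S.cmap_comp hT hp hcomm hsq hs.1 hu h2 a]
  have hcommit : ∀ u ∈ S.rels, ∀ i, ∀ a : Quotient (S.csetoid T hT),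
      f^[i] (S.cmap T hT u a) = S.cmap T hT u (f^[i] a) := by
    intro u hu i
    induction i with
    | zero => intro a; rfl
    | succ i ih =>
      intro a
      rw [Function.iterate_succ_apply', Function.iterate_succ_apply', ih, hcommute u hu]
  have horb : ∀ u ∈ S.rels, ∀ a : Quotient (S.csetoid T hT),
      S.cmap T hT u '' {b | ∃ i, f^[i] a = b} = {b | ∃ i, f^[i] (S.cmap T hT u a) = b} := by
    intro u hu a
    ext b
    constructor
    · rintro ⟨b', ⟨i, rfl⟩, rfl⟩
      exact ⟨i, hcommit u hu i a⟩
    · rintro ⟨i, rfl⟩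
      exact ⟨f^[i] a, ⟨i, rfl⟩, (hcommit u hu i a).symm⟩
  have hcardorb : ∀ a b : Quotient (S.csetoid T hT), ({b' | ∃ i, f^[i] a = b'}).ncard =
      ({b' | ∃ i, f^[i] b = b'}).ncard := by
    intro a b
    obtain ⟨u, hu, hub⟩ := hcmaps a b
    rw [← hub, ← horb u hu a]
    exact (Set.ncard_image_of_injective _ (S.cmap_injective hT hp hcomm hsq hu)).symm
  obtain ⟨c₀⟩ := hQne
  set d := ({b' | ∃ i, f^[i] c₀ = b'}).ncard with hd
  have hGL : Nat.card (Quotient (S.csetoid T hT)) = d * Nat.card (Quotient sd2) := by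
    have := ncard_eq_mul_image sd2 Set.univ d ?_
    · rw [Set.ncard_univ] at this
      rw [this, Set.image_univ, Set.range_eq_univ.mpr Quotient.mk''_surjective,
        Set.ncard_univ]
    · intro a _
      have he : {z' ∈ Set.univ | sd2.r a z'} = {b' | ∃ i, f^[i] a = b'} := by
        ext b; simp only [Set.mem_setOf_eq, Set.mem_univ, true_and]; rfl
      rw [he]
      exact hcardorb a c₀
  have hdvd : d ∣ p := ⟨_, by rw [← hQ, hGL]⟩
  have hfne : ∃ a : Quotient (S.csetoid T hT), f a ≠ a := by
    obtain ⟨x⟩ := S.nonempty_of_pscheme hp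
    refine ⟨Quotient.mk _ x, ?_⟩
    intro hfa
    have hedge : (x, tmap s x) ∈ s := S.tmap_mem hp hs x
    have : f (Quotient.mk _ x) = Quotient.mk _ (tmap s x) :=
      S.cmap_eq hT hp hcomm hsq hs.1 hedge
    rw [this] at hfa
    have hr : (S.csetoid T hT).r (tmap s x) x := Quotient.eq.mp hfa
    have hs' : s = S.relOf x (tmap s x) := S.eq_relOf hs.1 hedge
    have : S.relOf x (tmap s x) ∈ T := (S.csetoid T hT).iseqv.symm hr
    exact hsT (hs' ▸ this)
  rcases (Nat.Prime.eq_one_or_self_of_dvd hp.1 d hdvd) with hd1 | hdp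
  · exfalso
    obtain ⟨a, ha⟩ := hfne
    have h1 : ({b' | ∃ i, f^[i] a = b'}).ncard = 1 := by rw [hcardorb a c₀, ← hd, hd1]
    obtain ⟨b, hb⟩ := Set.ncard_eq_one.mp h1
    have hmem1 : a ∈ {b' | ∃ i, f^[i] a = b'} := ⟨0, rfl⟩
    have hmem2 : f a ∈ {b' | ∃ i, f^[i] a = b'} := ⟨1, rfl⟩
    rw [hb] at hmem1 hmem2
    exact ha (hmem2.trans hmem1.symm)
  · have hone : Nat.card (Quotient sd2) = 1 := by
      have h := hGL
      rw [hQ, hdp] at h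
      have h2 : p * Nat.card (Quotient sd2) = p * 1 := by rw [mul_one]; exact h.symm
      exact Nat.eq_of_mul_eq_mul_left hp.1.pos h2
    have hsub : Subsingleton (Quotient sd2) := (Nat.card_eq_one_iff_unique.mp hone).1
    have heq : Quotient.mk sd2 c = Quotient.mk sd2 c' := Subsingleton.elim _ _
    have h := Quotient.eq.mp heq
    exact h

/-- The key decomposition: every square `u* u` lies inside some `t* t` with `t ∈ T`. -/
lemma square_decomp (hp : S.IsPScheme p) (hcomm : S.IsCommutative)
    (hsq : ∀ u ∈ S.rels, S.cprod (schemeTransp u) u ⊆ T)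
    {s : Set (X × X)} (hs : S.IsThin s) (hsT : s ∉ T)
    (hQ : Nat.card (Quotient (S.csetoid T hT)) = p)
    {u : Set (X × X)} (hu : u ∈ S.rels) {w : Set (X × X)}
    (hw : w ∈ S.cprod (schemeTransp u) u) :
    ∃ t ∈ T, w ∈ S.cprod (schemeTransp t) t := by
  obtain ⟨⟨y, y'⟩, hyy'⟩ := S.rel_nonempty hp hw.1
  obtain ⟨x, hx1, hx2⟩ := S.exists_mid (S.transpose_mem u hu) hu hw hyy'
  have hxy : (x, y) ∈ u := mem_transp.mp hx1
  obtain ⟨i, hi⟩ := S.cmap_transitive hT hp hcomm hsq hs hsT hQ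
    (Quotient.mk _ x) (Quotient.mk _ y)
  set m := (tmap s)^[i] x with hm
  have hxm : (x, m) ∈ spow s i := S.spow_edge hp hs i x
  have hmk : Quotient.mk (S.csetoid T hT) m = Quotient.mk (S.csetoid T hT) y := by
    have h1 : S.cmap T hT (spow s i) (Quotient.mk _ x) = Quotient.mk _ m :=
      S.cmap_eq hT hp hcomm hsq (S.spow_thin hp hs i).1 hxm
    rw [S.cmap_spow hT hp hcomm hsq hs i] at h1
    rw [← h1, hi]
  have htT : S.relOf m y ∈ T := Quotient.eq.mp hmk
  set t := S.relOf m y with ht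
  have htr : t ∈ S.rels := S.relOf_mem m y
  have humem : u ∈ S.cprod (spow s i) t :=
    S.mem_cprod (S.spow_thin hp hs i).1 htr hu hxy hxm (S.mem_relOf m y)
  obtain ⟨m', hm'1, hm'2⟩ := S.exists_mid (S.spow_thin hp hs i).1 htr humem hx2
  have hmm' : m' = m := S.thin_unique (S.spow_thin hp hs i) hm'1 hxm
  rw [hmm'] at hm'2
  exact ⟨t, htT, S.mem_cprod (S.transpose_mem t htr) htr hw.1 hyy'
    (mem_transp.mpr (S.mem_relOf m y)) hm'2⟩

end CosetMaps2

/-- If there is a thin relation outside the thin residue, then the thin residue is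
generated by the squares of its own elements. -/
lemma thinResidue_subset_resOf_self (hp : S.IsPScheme p) (hcomm : S.IsCommutative)
    {s : Set (X × X)} (hs : S.IsThin s) (hsT : s ∉ S.thinResidue)
    (hQ : Nat.card (Quotient (S.csetoid S.thinResidue (S.thinResidue_good hp))) = p) :
    S.thinResidue ⊆ S.resOf S.thinResidue := by
  apply Set.sInter_subset_of_mem
  constructor
  · -- resOf thinResidue is a closed subset
    refine ⟨⟨schemeDiag X, S.diag_mem_resOf hp (S.thinResidue_good hp).2.1⟩, ?_, ?_⟩
    · exact S.resOf_subset_rels _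
    · intro u hu v hv
      exact S.resOf_closed_prod hu hv
  · -- it contains all squares of S
    intro u hu
    intro w hw
    obtain ⟨t, htT, hwt⟩ := S.square_decomp (S.thinResidue_good hp) hp hcomm
      (fun v hv => S.squares_subset_thinResidue hv) hs hsT hQ hu hw
    exact S.squares_subset_resOf htT hwt

/-! ### Quotient scheme by a thin good closed subset -/

section QuotientScheme

variable {N : Set (Set (X × X))} (hN : S.GoodClosed N)

/-- The image of a relation in the quotient by the cosets of `N`. -/
def qrel (s : Set (X × X)) :
    Set (Quotient (S.csetoid N hN) × Quotient (S.csetoid N hN)) :=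
  {q | ∃ x y, q = (Quotient.mk _ x, Quotient.mk _ y) ∧ (x, y) ∈ s}

lemma mem_qrel_of {s : Set (X × X)} {x y : X} (h : (x, y) ∈ s) :
    (Quotient.mk (S.csetoid N hN) x, Quotient.mk (S.csetoid N hN) y) ∈ S.qrel hN s :=
  ⟨x, y, rfl, h⟩

lemma N_isThin (hNg : S.GoodClosed N) (hNthin : ∀ n ∈ N, S.val n = 1)
    {n : Set (X × X)} (hn : n ∈ N) : S.IsThin n := ⟨hNg.1 hn, hNthin n hn⟩

/-- Characterisation of membership in a quotient relation, right-handed. -/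
lemma mem_qrel_iff (hp : S.IsPScheme p) (hcomm : S.IsCommutative)
    (hNthin : ∀ n ∈ N, S.val n = 1) {s : Set (X × X)} (hs : s ∈ S.rels) {x y : X} :
    (Quotient.mk (S.csetoid N hN) x, Quotient.mk (S.csetoid N hN) y) ∈ S.qrel hN s ↔
      ∃ y', (S.csetoid N hN).r y' y ∧ (x, y') ∈ s := by
  constructor
  · rintro ⟨x₁, y₁, hq, hxy₁⟩
    have hx : Quotient.mk (S.csetoid N hN) x = Quotient.mk (S.csetoid N hN) x₁ :=
      congrArg Prod.fst hq
    have hy : Quotient.mk (S.csetoid N hN) y = Quotient.mk (S.csetoid N hN) y₁ :=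
      congrArg Prod.snd hq
    have hrx : (S.csetoid N hN).r x₁ x := (S.csetoid N hN).iseqv.symm (Quotient.eq.mp hx)
    have hry : (S.csetoid N hN).r y₁ y := (S.csetoid N hN).iseqv.symm (Quotient.eq.mp hy)
    -- transport along the thin relation joining x₁ to x
    set n := S.relOf x₁ x with hn
    have hnN : n ∈ N := hrx
    have hnthin : S.IsThin n := S.N_isThin hN hNthin hnN
    have hx1 : (x₁, x) ∈ n := S.mem_relOf x₁ x
    have htx : tmap n x₁ = x := ((S.mem_thin_iff hp hnthin).mp hx1).symm
    have hfa : (tmap n x₁, tmap n y₁) ∈ s := S.thin_faithful hp hcomm hnthin hs hxy₁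
    rw [htx] at hfa
    refine ⟨tmap n y₁, ?_, hfa⟩
    have h1 : (S.csetoid N hN).r y₁ (tmap n y₁) := by
      have : (y₁, tmap n y₁) ∈ n := S.tmap_mem hp hnthin y₁
      exact (S.csetoid_iff hN).mpr ⟨n, hnN, this⟩
    exact (S.csetoid N hN).iseqv.trans ((S.csetoid N hN).iseqv.symm h1) hry
  · rintro ⟨y', hr, hxy'⟩
    have : Quotient.mk (S.csetoid N hN) y' = Quotient.mk (S.csetoid N hN) y :=
      Quotient.sound hr
    exact this ▸ S.mem_qrel_of hN hxy'

/-- Characterisation of membership in a quotient relation, left-handed. -/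
lemma mem_qrel_iff_left (hp : S.IsPScheme p) (hcomm : S.IsCommutative)
    (hNthin : ∀ n ∈ N, S.val n = 1) {s : Set (X × X)} (hs : s ∈ S.rels) {x y : X} :
    (Quotient.mk (S.csetoid N hN) x, Quotient.mk (S.csetoid N hN) y) ∈ S.qrel hN s ↔
      ∃ x', (S.csetoid N hN).r x' x ∧ (x', y) ∈ s := by
  constructor
  · intro h
    obtain ⟨y', hry', hxy'⟩ := (S.mem_qrel_iff hN hp hcomm hNthin hs).mp h
    set n := S.relOf y' y with hndef
    have hnN : n ∈ N := hry'
    have hnthin : S.IsThin n := S.N_isThin hN hNthin hnN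
    have hty : tmap n y' = y := ((S.mem_thin_iff hp hnthin).mp (S.mem_relOf y' y)).symm
    have hfa : (tmap n x, tmap n y') ∈ s := S.thin_faithful hp hcomm hnthin hs hxy'
    rw [hty] at hfa
    refine ⟨tmap n x, ?_, hfa⟩
    exact (S.csetoid N hN).iseqv.symm
      ((S.csetoid_iff hN).mpr ⟨n, hnN, S.tmap_mem hp hnthin x⟩)
  · rintro ⟨x', hr, hx'y⟩
    have : Quotient.mk (S.csetoid N hN) x' = Quotient.mk (S.csetoid N hN) x :=
      Quotient.sound hr
    exact this ▸ S.mem_qrel_of hN hx'y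

lemma qrel_rcomp (hp : S.IsPScheme p) (hNthin : ∀ n ∈ N, S.val n = 1)
    {s : Set (X × X)} {n : Set (X × X)} (hn : n ∈ N) :
    S.qrel hN (rcomp s n) = S.qrel hN s := by
  have hnthin : S.IsThin n := S.N_isThin hN hNthin hn
  ext ⟨c, d⟩
  constructor
  · rintro ⟨x, y, hq, z, hxz, hzy⟩
    have : Quotient.mk (S.csetoid N hN) z = Quotient.mk (S.csetoid N hN) y :=
      Quotient.sound ((S.csetoid_iff hN).mpr ⟨n, hn, hzy⟩)
    rw [hq]
    rw [← this]
    exact S.mem_qrel_of hN hxz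
  · rintro ⟨x, y, hq, hxy⟩
    have h2 : (x, tmap n y) ∈ rcomp s n := ⟨y, hxy, S.tmap_mem hp hnthin y⟩
    have : Quotient.mk (S.csetoid N hN) (tmap n y) = Quotient.mk (S.csetoid N hN) y :=
      Quotient.sound ((S.csetoid N hN).iseqv.symm
        ((S.csetoid_iff hN).mpr ⟨n, hn, S.tmap_mem hp hnthin y⟩))
    rw [hq, ← this]
    exact S.mem_qrel_of hN h2

lemma qrel_eq_of_common (hp : S.IsPScheme p) (hcomm : S.IsCommutative)
    (hNthin : ∀ n ∈ N, S.val n = 1) {s t : Set (X × X)} (hs : s ∈ S.rels) (ht : t ∈ S.rels)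
    {q : Quotient (S.csetoid N hN) × Quotient (S.csetoid N hN)}
    (h1 : q ∈ S.qrel hN s) (h2 : q ∈ S.qrel hN t) : S.qrel hN s = S.qrel hN t := by
  obtain ⟨x, y, rfl, hxy⟩ := h1
  obtain ⟨y₁, hr1, hxy₁⟩ := (S.mem_qrel_iff hN hp hcomm hNthin ht).mp h2
  -- (x,y) ∈ s and (x,y₁) ∈ t with y₁ ≈ y
  have hry : (S.csetoid N hN).r y y₁ := by
    have h3 : (S.csetoid N hN).r y₁ y := hr1
    exact (S.csetoid N hN).iseqv.symm h3
  set n := S.relOf y y₁ with hndef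
  have hnN : n ∈ N := hry
  have ht' : t = rcomp s n := by
    apply S.rel_eq_rel ht (S.rcomp_mem_rels hp hs (S.N_isThin hN hNthin hnN))
      hxy₁ ⟨y, hxy, S.mem_relOf y y₁⟩
  rw [ht', S.qrel_rcomp hN hp hNthin hnN]

lemma qrel_transp (hp : S.IsPScheme p) (hcomm : S.IsCommutative)
    (hNthin : ∀ n ∈ N, S.val n = 1) {s : Set (X × X)} (hs : s ∈ S.rels) :
    schemeTransp (S.qrel hN s) = S.qrel hN (schemeTransp s) := by
  ext ⟨c, d⟩
  obtain ⟨x, rfl⟩ := Quotient.exists_rep c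
  obtain ⟨y, rfl⟩ := Quotient.exists_rep d
  constructor
  · intro h
    have h2 : (Quotient.mk (S.csetoid N hN) y, Quotient.mk (S.csetoid N hN) x) ∈
        S.qrel hN s := h
    obtain ⟨x', hr, hx'⟩ := (S.mem_qrel_iff_left hN hp hcomm hNthin hs).mp h2
    exact (S.mem_qrel_iff hN hp hcomm hNthin (S.transpose_mem s hs)).mpr
      ⟨x', hr, mem_transp.mpr hx'⟩
  · intro h
    obtain ⟨y', hr, hy'⟩ :=
      (S.mem_qrel_iff hN hp hcomm hNthin (S.transpose_mem s hs)).mp h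
    show (Quotient.mk (S.csetoid N hN) y, Quotient.mk (S.csetoid N hN) x) ∈ S.qrel hN s
    exact (S.mem_qrel_iff_left hN hp hcomm hNthin hs).mpr ⟨y', hr, mem_transp.mp hy'⟩

lemma qrel_diag :
    S.qrel hN (schemeDiag X) = schemeDiag (Quotient (S.csetoid N hN)) := by
  ext ⟨c, d⟩
  constructor
  · rintro ⟨x, y, hq, (rfl : x = y)⟩
    have hc : c = Quotient.mk (S.csetoid N hN) x := congrArg Prod.fst hq
    have hd : d = Quotient.mk (S.csetoid N hN) x := congrArg Prod.snd hq
    show c = d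
    rw [hc, hd]
  · intro h
    obtain ⟨x, rfl⟩ := Quotient.exists_rep c
    obtain ⟨y, rfl⟩ := Quotient.exists_rep d
    have : Quotient.mk (S.csetoid N hN) x = Quotient.mk (S.csetoid N hN) y := h
    rw [this]
    exact S.mem_qrel_of hN (rfl : (y, y) ∈ schemeDiag X)

/-- The class of relations with the same image in the quotient. -/
def qcls (s : Set (X × X)) : Set (Set (X × X)) :=
  {s' ∈ S.rels | S.qrel hN s' = S.qrel hN s}

lemma mem_qrel_iff_cls (hp : S.IsPScheme p) (hcomm : S.IsCommutative)
    (hNthin : ∀ n ∈ N, S.val n = 1) {s : Set (X × X)} (hs : s ∈ S.rels) {x z : X} :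
    (Quotient.mk (S.csetoid N hN) x, Quotient.mk (S.csetoid N hN) z) ∈ S.qrel hN s ↔
      ∃ s' ∈ S.qcls hN s, (x, z) ∈ s' := by
  constructor
  · intro h
    refine ⟨S.relOf x z, ⟨S.relOf_mem x z, ?_⟩, S.mem_relOf x z⟩
    exact S.qrel_eq_of_common hN hp hcomm hNthin (S.relOf_mem x z) hs
      (S.mem_qrel_of hN (S.mem_relOf x z)) h
  · rintro ⟨s', ⟨hs', hq⟩, hxz⟩
    rw [← hq]
    exact S.mem_qrel_of hN hxz

end QuotientScheme

section QuotientScheme2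

variable {N : Set (Set (X × X))} (hN : S.GoodClosed N)

lemma qcount_fib (hp : S.IsPScheme p) (hcomm : S.IsCommutative)
    (hNthin : ∀ n ∈ N, S.val n = 1) {s t : Set (X × X)}
    (hs : s ∈ S.rels) (ht : t ∈ S.rels) (x y : X) :
    ({z : X | (Quotient.mk (S.csetoid N hN) x, Quotient.mk (S.csetoid N hN) z) ∈ S.qrel hN s ∧
        (Quotient.mk (S.csetoid N hN) z, Quotient.mk (S.csetoid N hN) y) ∈ S.qrel hN t}).ncard
      = S.nOrd N * Nat.card {zb : Quotient (S.csetoid N hN) |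
          (Quotient.mk (S.csetoid N hN) x, zb) ∈ S.qrel hN s ∧
          (zb, Quotient.mk (S.csetoid N hN) y) ∈ S.qrel hN t} := by
  set sd := S.csetoid N hN with hsd
  set Z : Set X := {z : X | (Quotient.mk sd x, Quotient.mk sd z) ∈ S.qrel hN s ∧
      (Quotient.mk sd z, Quotient.mk sd y) ∈ S.qrel hN t} with hZ
  have hGL := ncard_eq_mul_image sd Z (S.nOrd N) ?_
  · rw [hGL]
    congr 1
    rw [Nat.card_coe_set_eq]
    congr 1
    ext zb
    constructor
    · rintro ⟨z, hz, rfl⟩; exact hz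
    · intro hzb
      obtain ⟨z, rfl⟩ := Quotient.exists_rep zb
      exact ⟨z, hzb, rfl⟩
  · intro z hz
    have he : {z' ∈ Z | sd.r z z'} = {y : X | S.relOf z y ∈ N} := by
      ext z'
      constructor
      · rintro ⟨-, hr⟩; exact hr
      · intro hr
        have hmk : Quotient.mk sd z' = Quotient.mk sd z := Quotient.sound (sd.iseqv.symm hr)
        refine ⟨?_, hr⟩
        show (Quotient.mk sd x, Quotient.mk sd z') ∈ S.qrel hN s ∧
          (Quotient.mk sd z', Quotient.mk sd y) ∈ S.qrel hN t
        rw [hmk]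
        exact hz
    rw [he, S.class_ncard hN.1 z]

lemma qcount_decomp (hp : S.IsPScheme p) (hcomm : S.IsCommutative)
    (hNthin : ∀ n ∈ N, S.val n = 1) {s t u : Set (X × X)}
    (hs : s ∈ S.rels) (ht : t ∈ S.rels) (hu : u ∈ S.rels) {x y : X} (hxy : (x, y) ∈ u) :
    ({z : X | (Quotient.mk (S.csetoid N hN) x, Quotient.mk (S.csetoid N hN) z) ∈ S.qrel hN s ∧
        (Quotient.mk (S.csetoid N hN) z, Quotient.mk (S.csetoid N hN) y) ∈ S.qrel hN t}).ncard
      = ∑ pr ∈ ((Set.toFinite (S.qcls hN s)).toFinset ×ˢ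
          (Set.toFinite (S.qcls hN t)).toFinset), S.a pr.1 pr.2 u := by
  classical
  set F := ((Set.toFinite (S.qcls hN s)).toFinset ×ˢ (Set.toFinite (S.qcls hN t)).toFinset)
    with hF
  have hcover : {z : X |
      (Quotient.mk (S.csetoid N hN) x, Quotient.mk (S.csetoid N hN) z) ∈ S.qrel hN s ∧
        (Quotient.mk (S.csetoid N hN) z, Quotient.mk (S.csetoid N hN) y) ∈ S.qrel hN t}
      = ⋃ pr ∈ F, {z : X | (x, z) ∈ pr.1 ∧ (z, y) ∈ pr.2} := by
    ext z
    simp only [Set.mem_iUnion, Set.mem_setOf_eq, hF, Finset.mem_product,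
      Set.Finite.mem_toFinset]
    constructor
    · rintro ⟨h1, h2⟩
      obtain ⟨s', hs', hzs'⟩ := (S.mem_qrel_iff_cls hN hp hcomm hNthin hs).mp h1
      obtain ⟨t', ht', hzt'⟩ := (S.mem_qrel_iff_cls hN hp hcomm hNthin ht).mp h2
      exact ⟨(s', t'), ⟨hs', ht'⟩, hzs', hzt'⟩
    · rintro ⟨⟨s', t'⟩, ⟨hs', ht'⟩, hzs', hzt'⟩
      constructor
      · exact (S.mem_qrel_iff_cls hN hp hcomm hNthin hs).mpr ⟨s', hs', hzs'⟩
      · exact (S.mem_qrel_iff_cls hN hp hcomm hNthin ht).mpr ⟨t', ht', hzt'⟩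
  have hdisj : ∀ pr ∈ F, ∀ pr' ∈ F, pr ≠ pr' →
      Disjoint {z : X | (x, z) ∈ pr.1 ∧ (z, y) ∈ pr.2}
        {z : X | (x, z) ∈ pr'.1 ∧ (z, y) ∈ pr'.2} := by
    intro pr hpr pr' hpr' hne
    rw [hF, Finset.mem_product, Set.Finite.mem_toFinset, Set.Finite.mem_toFinset] at hpr hpr'
    rw [Set.disjoint_left]
    rintro z ⟨h1, h2⟩ ⟨h1', h2'⟩
    apply hne
    have e1 : pr.1 = pr'.1 := S.rel_eq_rel hpr.1.1 hpr'.1.1 h1 h1'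
    have e2 : pr.2 = pr'.2 := S.rel_eq_rel hpr.2.1 hpr'.2.1 h2 h2'
    exact Prod.ext e1 e2
  rw [hcover, ncard_biUnion_eq _ _ hdisj]
  apply Finset.sum_congr rfl
  intro pr hpr
  rw [hF, Finset.mem_product, Set.Finite.mem_toFinset, Set.Finite.mem_toFinset] at hpr
  exact (S.a_eq_ncard hpr.1.1 hpr.2.1 hu hxy).symm

lemma qcount_eq (hp : S.IsPScheme p) (hcomm : S.IsCommutative)
    (hNthin : ∀ n ∈ N, S.val n = 1) {s t u : Set (X × X)}
    (hs : s ∈ S.rels) (ht : t ∈ S.rels) (hu : u ∈ S.rels) {x y x₂ y₂ : X}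
    (h1 : (Quotient.mk (S.csetoid N hN) x, Quotient.mk (S.csetoid N hN) y) ∈ S.qrel hN u)
    (h2 : (Quotient.mk (S.csetoid N hN) x₂, Quotient.mk (S.csetoid N hN) y₂) ∈ S.qrel hN u) :
    Nat.card {zb : Quotient (S.csetoid N hN) |
        (Quotient.mk (S.csetoid N hN) x, zb) ∈ S.qrel hN s ∧
        (zb, Quotient.mk (S.csetoid N hN) y) ∈ S.qrel hN t}
      = Nat.card {zb : Quotient (S.csetoid N hN) |
        (Quotient.mk (S.csetoid N hN) x₂, zb) ∈ S.qrel hN s ∧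
        (zb, Quotient.mk (S.csetoid N hN) y₂) ∈ S.qrel hN t} := by
  obtain ⟨y₁, hry₁, hxy₁⟩ := (S.mem_qrel_iff hN hp hcomm hNthin hu).mp h1
  obtain ⟨y₃, hry₃, hxy₃⟩ := (S.mem_qrel_iff hN hp hcomm hNthin hu).mp h2
  have e1 : Quotient.mk (S.csetoid N hN) y = Quotient.mk (S.csetoid N hN) y₁ :=
    (Quotient.sound hry₁).symm
  have e2 : Quotient.mk (S.csetoid N hN) y₂ = Quotient.mk (S.csetoid N hN) y₃ :=
    (Quotient.sound hry₃).symm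
  have hpos : 0 < S.nOrd N := S.nOrd_pos hp hN
  apply Nat.eq_of_mul_eq_mul_left hpos
  rw [e1, e2, ← S.qcount_fib hN hp hcomm hNthin hs ht x y₁,
    ← S.qcount_fib hN hp hcomm hNthin hs ht x₂ y₃,
    S.qcount_decomp hN hp hcomm hNthin hs ht hu hxy₁,
    S.qcount_decomp hN hp hcomm hNthin hs ht hu hxy₃]

/-- The quotient scheme of `S` by a thin good closed subset `N`. -/
noncomputable def qscheme [Fintype (Quotient (S.csetoid N hN))] (hp : S.IsPScheme p)
    (hcomm : S.IsCommutative) (hNthin : ∀ n ∈ N, S.val n = 1) :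
    AssocScheme (Quotient (S.csetoid N hN)) where
  rels := (fun s => S.qrel hN s) '' S.rels
  partition := by
    rintro ⟨c, d⟩
    obtain ⟨x, rfl⟩ := Quotient.exists_rep c
    obtain ⟨y, rfl⟩ := Quotient.exists_rep d
    refine ⟨S.qrel hN (S.relOf x y),
      ⟨⟨_, S.relOf_mem x y, rfl⟩, S.mem_qrel_of hN (S.mem_relOf x y)⟩, ?_⟩
    rintro A ⟨⟨sA, hsA, rfl⟩, hmemA⟩
    exact S.qrel_eq_of_common hN hp hcomm hNthin hsA (S.relOf_mem x y) hmemA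
      (S.mem_qrel_of hN (S.mem_relOf x y))
  diag_mem := ⟨schemeDiag X, S.diag_mem, S.qrel_diag hN⟩
  transpose_mem := by
    rintro A ⟨s, hs, rfl⟩
    exact ⟨schemeTransp s, S.transpose_mem s hs,
      (S.qrel_transp hN hp hcomm hNthin hs).symm⟩
  a := fun A B C =>
    if h : ∃ q, q ∈ C then
      Nat.card {zb : Quotient (S.csetoid N hN) |
        (h.choose.1, zb) ∈ A ∧ (zb, h.choose.2) ∈ B}
    else 0
  a_spec := by
    rintro A ⟨s, hs, rfl⟩ B ⟨t, ht, rfl⟩ C ⟨u, hu, rfl⟩ c d hcd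
    have hex : ∃ q, q ∈ S.qrel hN u := ⟨(c, d), hcd⟩
    change (if h : ∃ q, q ∈ S.qrel hN u then
      Nat.card {zb : Quotient (S.csetoid N hN) |
        (h.choose.1, zb) ∈ S.qrel hN s ∧ (zb, h.choose.2) ∈ S.qrel hN t} else 0) = _
    rw [dif_pos hex]
    have hq0 := hex.choose_spec
    obtain ⟨x₁, hx₁⟩ := Quotient.exists_rep hex.choose.1
    obtain ⟨y₁, hy₁⟩ := Quotient.exists_rep hex.choose.2
    obtain ⟨x₂, rfl⟩ := Quotient.exists_rep c
    obtain ⟨y₂, rfl⟩ := Quotient.exists_rep d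
    have hq0' : (Quotient.mk (S.csetoid N hN) x₁, Quotient.mk (S.csetoid N hN) y₁) ∈
        S.qrel hN u := by
      rw [hx₁, hy₁, Prod.mk.eta]; exact hq0
    have := S.qcount_eq hN hp hcomm hNthin hs ht hu hq0' hcd
    rw [hx₁, hy₁] at this
    exact this

lemma qscheme_rels_iff [Fintype (Quotient (S.csetoid N hN))] (hp : S.IsPScheme p)
    (hcomm : S.IsCommutative) (hNthin : ∀ n ∈ N, S.val n = 1) {A} :
    A ∈ (S.qscheme hN hp hcomm hNthin).rels ↔ ∃ s ∈ S.rels, S.qrel hN s = A := by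
  show A ∈ (fun s => S.qrel hN s) '' S.rels ↔ _
  rw [Set.mem_image]

end QuotientScheme2

section QuotientScheme3

variable {N : Set (Set (X × X))} (hN : S.GoodClosed N)
  [Fintype (Quotient (S.csetoid N hN))]

lemma qscheme_val_dvd (hp : S.IsPScheme p) (hcomm : S.IsCommutative)
    (hNthin : ∀ n ∈ N, S.val n = 1) {s : Set (X × X)} (hs : s ∈ S.rels) :
    (S.qscheme hN hp hcomm hNthin).val (S.qrel hN s) ∣ S.val s := by
  classical
  obtain ⟨x₀⟩ := S.nonempty_of_pscheme hp
  have hrel' : S.qrel hN s ∈ (S.qscheme hN hp hcomm hNthin).rels := ⟨s, hs, rfl⟩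
  have hv' := (S.qscheme hN hp hcomm hNthin).val_eq_ncard hrel'
    (Quotient.mk (S.csetoid N hN) x₀)
  set NF := (Set.toFinite N).toFinset with hNF
  set α := ∑ n ∈ NF, S.a n (schemeTransp s) (schemeTransp s) with hα
  have hGL := ncard_eq_mul_image (S.csetoid N hN) {z : X | (x₀, z) ∈ s} α ?_
  · have himg : Quotient.mk (S.csetoid N hN) '' {z : X | (x₀, z) ∈ s}
        = {zb | (Quotient.mk (S.csetoid N hN) x₀, zb) ∈ S.qrel hN s} := by
      ext zb
      constructor
      · rintro ⟨z, hz, rfl⟩; exact S.mem_qrel_of hN hz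
      · intro h
        obtain ⟨z, rfl⟩ := Quotient.exists_rep zb
        obtain ⟨z₁, hr, hz₁⟩ := (S.mem_qrel_iff hN hp hcomm hNthin hs).mp h
        exact ⟨z₁, hz₁, Quotient.sound hr⟩
    refine ⟨α, ?_⟩
    rw [S.val_eq_ncard hs x₀, hGL, himg, hv', mul_comm]
  · intro z hz
    have hzx₀ : (z, x₀) ∈ schemeTransp s := mem_transp.mpr hz
    have hcover : {z' ∈ {z : X | (x₀, z) ∈ s} | (S.csetoid N hN).r z z'}
        = ⋃ n ∈ NF, {z' : X | (z, z') ∈ n ∧ (z', x₀) ∈ schemeTransp s} := by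
      ext z'
      simp only [Set.mem_iUnion, Set.mem_setOf_eq, hNF, Set.Finite.mem_toFinset]
      constructor
      · rintro ⟨h1, h2⟩
        obtain ⟨n, hn, hzz'⟩ := (S.csetoid_iff hN).mp h2
        exact ⟨n, hn, hzz', mem_transp.mpr h1⟩
      · rintro ⟨n, hn, hzz', h1⟩
        exact ⟨mem_transp.mp h1, (S.csetoid_iff hN).mpr ⟨n, hn, hzz'⟩⟩
    have hdisj : ∀ n ∈ NF, ∀ n' ∈ NF, n ≠ n' →
        Disjoint {z' : X | (z, z') ∈ n ∧ (z', x₀) ∈ schemeTransp s}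
          {z' : X | (z, z') ∈ n' ∧ (z', x₀) ∈ schemeTransp s} := by
      intro n hn n' hn' hne
      rw [hNF, Set.Finite.mem_toFinset] at hn hn'
      rw [Set.disjoint_left]
      rintro z' ⟨h1, -⟩ ⟨h1', -⟩
      exact hne (S.rel_eq_rel (hN.1 hn) (hN.1 hn') h1 h1')
    rw [hcover, ncard_biUnion_eq _ _ hdisj, hα]
    apply Finset.sum_congr rfl
    intro n hn
    rw [hNF, Set.Finite.mem_toFinset] at hn
    exact (S.a_eq_ncard (hN.1 hn) (S.transpose_mem s hs) (S.transpose_mem s hs) hzx₀).symm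

lemma qscheme_pscheme (hp : S.IsPScheme p) (hcomm : S.IsCommutative)
    (hNthin : ∀ n ∈ N, S.val n = 1) :
    (S.qscheme hN hp hcomm hNthin).IsPScheme p := by
  refine ⟨hp.1, ?_, ?_⟩
  · obtain ⟨n, hn⟩ := hp.2.1
    have hcard := S.card_eq_nOrd_mul hN
    have hdvd : Nat.card (Quotient (S.csetoid N hN)) ∣ p ^ n := by
      rw [← hn, ← Nat.card_eq_fintype_card]
      exact Dvd.intro_left _ hcard.symm
    obtain ⟨m, -, hm⟩ := (Nat.dvd_prime_pow hp.1).mp hdvd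
    exact ⟨m, by rw [Nat.card_eq_fintype_card] at hm; exact hm⟩
  · rintro A ⟨s, hs, rfl⟩
    obtain ⟨i, hi⟩ := hp.2.2 s hs
    have hdvd := S.qscheme_val_dvd hN hp hcomm hNthin hs
    rw [hi] at hdvd
    obtain ⟨m, -, hm⟩ := (Nat.dvd_prime_pow hp.1).mp hdvd
    exact ⟨m, hm⟩

lemma qscheme_comm (hp : S.IsPScheme p) (hcomm : S.IsCommutative)
    (hNthin : ∀ n ∈ N, S.val n = 1) :
    (S.qscheme hN hp hcomm hNthin).IsCommutative := by
  rintro A ⟨s, hs, rfl⟩ B ⟨t, ht, rfl⟩ C ⟨u, hu, rfl⟩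
  obtain ⟨⟨x, y⟩, hxy⟩ := S.rel_nonempty hp hu
  have hcd : (Quotient.mk (S.csetoid N hN) x, Quotient.mk (S.csetoid N hN) y) ∈
      S.qrel hN u := S.mem_qrel_of hN hxy
  have ha1 := (S.qscheme hN hp hcomm hNthin).a_spec _ ⟨s, hs, rfl⟩ _ ⟨t, ht, rfl⟩
    _ ⟨u, hu, rfl⟩ _ _ hcd
  have ha2 := (S.qscheme hN hp hcomm hNthin).a_spec _ ⟨t, ht, rfl⟩ _ ⟨s, hs, rfl⟩
    _ ⟨u, hu, rfl⟩ _ _ hcd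
  rw [ha1, ha2]
  apply Nat.eq_of_mul_eq_mul_left (S.nOrd_pos hp hN)
  rw [← S.qcount_fib hN hp hcomm hNthin hs ht x y,
    ← S.qcount_fib hN hp hcomm hNthin ht hs x y,
    S.qcount_decomp hN hp hcomm hNthin hs ht hu hxy,
    S.qcount_decomp hN hp hcomm hNthin ht hs hu hxy]
  rw [Finset.sum_product, Finset.sum_product]
  rw [Finset.sum_comm]
  apply Finset.sum_congr rfl
  intro t' ht'
  apply Finset.sum_congr rfl
  intro s' hs'
  rw [Set.Finite.mem_toFinset] at ht' hs'
  exact hcomm s' hs'.1 t' ht'.1 u hu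

end QuotientScheme3

section QuotientScheme4

variable {N : Set (Set (X × X))} (hN : S.GoodClosed N)
  [Fintype (Quotient (S.csetoid N hN))]

lemma qrel_mem_cprod_lift (hp : S.IsPScheme p) (hcomm : S.IsCommutative)
    (hNthin : ∀ n ∈ N, S.val n = 1) {u v w : Set (X × X)}
    (hu : u ∈ S.rels) (hv : v ∈ S.rels) (hw : w ∈ S.cprod u v) :
    S.qrel hN w ∈ (S.qscheme hN hp hcomm hNthin).cprod (S.qrel hN u) (S.qrel hN v) := by
  obtain ⟨⟨x, y⟩, hxy⟩ := S.rel_nonempty hp hw.1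
  obtain ⟨z, hz1, hz2⟩ := S.exists_mid hu hv hw hxy
  exact (S.qscheme hN hp hcomm hNthin).mem_cprod ⟨u, hu, rfl⟩ ⟨v, hv, rfl⟩
    ⟨w, hw.1, rfl⟩ (S.mem_qrel_of hN hxy) (S.mem_qrel_of hN hz1) (S.mem_qrel_of hN hz2)

lemma qgood (hp : S.IsPScheme p) (hcomm : S.IsCommutative)
    (hNthin : ∀ n ∈ N, S.val n = 1) {V : Set (Set (X × X))} (hV : S.GoodClosed V) :
    (S.qscheme hN hp hcomm hNthin).GoodClosed ((fun v => S.qrel hN v) '' V) := by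
  refine ⟨?_, ⟨schemeDiag X, hV.2.1, S.qrel_diag hN⟩, ?_, ?_⟩
  · rintro A ⟨v, hv, rfl⟩
    exact ⟨v, hV.1 hv, rfl⟩
  · rintro A ⟨v, hv, rfl⟩
    exact ⟨schemeTransp v, hV.2.2.1 v hv,
      (S.qrel_transp hN hp hcomm hNthin (hV.1 hv)).symm⟩
  · rintro A ⟨u, hu, rfl⟩ B ⟨v, hv, rfl⟩ C hC
    have hC' : C ∈ (S.qscheme hN hp hcomm hNthin).rels := hC.1
    obtain ⟨w₀, hw₀, rfl⟩ := hC'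
    have hq2 := S.qscheme_pscheme hN hp hcomm hNthin
    obtain ⟨⟨c, d⟩, hcd⟩ := (S.qscheme hN hp hcomm hNthin).rel_nonempty hq2 hC.1
    obtain ⟨zbar, hz1, hz2⟩ := (S.qscheme hN hp hcomm hNthin).exists_mid
      ⟨u, hV.1 hu, rfl⟩ ⟨v, hV.1 hv, rfl⟩ hC hcd
    obtain ⟨x, rfl⟩ := Quotient.exists_rep c
    obtain ⟨y, rfl⟩ := Quotient.exists_rep d
    obtain ⟨z, rfl⟩ := Quotient.exists_rep zbar
    obtain ⟨z₁, hrz₁, hxz₁⟩ := (S.mem_qrel_iff hN hp hcomm hNthin (hV.1 hu)).mp hz1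
    have hmkz : Quotient.mk (S.csetoid N hN) z = Quotient.mk (S.csetoid N hN) z₁ :=
      (Quotient.sound hrz₁).symm
    rw [hmkz] at hz2
    obtain ⟨y₁, hry₁, hzy₁⟩ := (S.mem_qrel_iff hN hp hcomm hNthin (hV.1 hv)).mp hz2
    have hwmem : S.relOf x y₁ ∈ S.cprod u v :=
      S.relOf_mem_cprod (hV.1 hu) (hV.1 hv) hxz₁ hzy₁
    have hwV : S.relOf x y₁ ∈ V := hV.2.2.2 u hu v hv hwmem
    refine ⟨S.relOf x y₁, hwV, ?_⟩
    apply S.qrel_eq_of_common hN hp hcomm hNthin (S.relOf_mem x y₁) hw₀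
      (S.mem_qrel_of hN (S.mem_relOf x y₁))
    have hmky : Quotient.mk (S.csetoid N hN) y₁ = Quotient.mk (S.csetoid N hN) y :=
      Quotient.sound hry₁
    rw [hmky]
    exact hcd

lemma qnOrd (hp : S.IsPScheme p) (hcomm : S.IsCommutative)
    (hNthin : ∀ n ∈ N, S.val n = 1) {V : Set (Set (X × X))} (hV : S.GoodClosed V)
    (hNV : N ⊆ V) :
    S.nOrd V = S.nOrd N *
      (S.qscheme hN hp hcomm hNthin).nOrd ((fun v => S.qrel hN v) '' V) := by
  obtain ⟨x₀⟩ := S.nonempty_of_pscheme hp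
  have himgsub : ((fun v => S.qrel hN v) '' V) ⊆ (S.qscheme hN hp hcomm hNthin).rels := by
    rintro A ⟨v, hv, rfl⟩; exact ⟨v, hV.1 hv, rfl⟩
  have hclass' := (S.qscheme hN hp hcomm hNthin).class_ncard himgsub
    (Quotient.mk (S.csetoid N hN) x₀)
  have hclass := S.class_ncard hV.1 x₀
  have hkey : {d : Quotient (S.csetoid N hN) |
      (S.qscheme hN hp hcomm hNthin).relOf (Quotient.mk (S.csetoid N hN) x₀) d ∈
        (fun v => S.qrel hN v) '' V}
      = Quotient.mk (S.csetoid N hN) '' {y : X | S.relOf x₀ y ∈ V} := by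
    ext d
    constructor
    · intro hd
      obtain ⟨y, rfl⟩ := Quotient.exists_rep d
      obtain ⟨v, hvV, hveq⟩ := hd
      have hpt := (S.qscheme hN hp hcomm hNthin).mem_relOf
        (Quotient.mk (S.csetoid N hN) x₀) (Quotient.mk (S.csetoid N hN) y)
      rw [← hveq] at hpt
      obtain ⟨y₁, hry₁, hxy₁⟩ := (S.mem_qrel_iff hN hp hcomm hNthin (hV.1 hvV)).mp hpt
      have : v = S.relOf x₀ y₁ := S.eq_relOf (hV.1 hvV) hxy₁
      refine ⟨y₁, ?_, Quotient.sound hry₁⟩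
      show S.relOf x₀ y₁ ∈ V
      rw [← this]
      exact hvV
    · rintro ⟨y₁, hy₁, rfl⟩
      have hpt : (Quotient.mk (S.csetoid N hN) x₀, Quotient.mk (S.csetoid N hN) y₁) ∈
          S.qrel hN (S.relOf x₀ y₁) := S.mem_qrel_of hN (S.mem_relOf x₀ y₁)
      have : S.qrel hN (S.relOf x₀ y₁) =
          (S.qscheme hN hp hcomm hNthin).relOf (Quotient.mk (S.csetoid N hN) x₀)
            (Quotient.mk (S.csetoid N hN) y₁) :=
        (S.qscheme hN hp hcomm hNthin).eq_relOf ⟨_, S.relOf_mem x₀ y₁, rfl⟩ hpt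
      exact ⟨S.relOf x₀ y₁, hy₁, this⟩
  have hGL := ncard_eq_mul_image (S.csetoid N hN) {y : X | S.relOf x₀ y ∈ V}
      (S.nOrd N) ?_
  · rw [← hclass, hGL, ← hclass', hkey]
  · intro z hz
    have he : {z' ∈ {y : X | S.relOf x₀ y ∈ V} | (S.csetoid N hN).r z z'}
        = {y : X | S.relOf z y ∈ N} := by
      ext z'
      constructor
      · rintro ⟨-, hr⟩; exact hr
      · intro hr
        refine ⟨?_, hr⟩
        show S.relOf x₀ z' ∈ V
        have : S.relOf x₀ z' ∈ S.cprod (S.relOf x₀ z) (S.relOf z z') :=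
          S.relOf_mem_cprod (S.relOf_mem x₀ z) (S.relOf_mem z z')
            (S.mem_relOf x₀ z) (S.mem_relOf z z')
        exact hV.2.2.2 _ hz _ (hNV hr) this
    rw [he, S.class_ncard hN.1 z]

end QuotientScheme4

universe u in
lemma lemJ : ∀ (k : ℕ) {X' : Type u} [Fintype X'] (S' : AssocScheme X') (p : ℕ),
    Nat.card X' ≤ k → S'.IsPScheme p → S'.IsCommutative →
    ∀ V, S'.GoodClosed V → 1 < S'.nOrd V →
    ∃ U, S'.GoodClosed U ∧ U ⊆ V ∧ U ≠ V ∧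
      ∀ v ∈ V, S'.cprod (schemeTransp v) v ⊆ U := by
  intro k
  induction k with
  | zero =>
    intro X' _ S' p hk hp hcomm V hV hnV
    exfalso
    haveI := S'.nonempty_of_pscheme hp
    have hpos : 0 < Nat.card X' := Nat.card_pos
    omega
  | succ k ih =>
    intro X' instX S' p hk hp hcomm V hV hnV
    classical
    set N := {v ∈ V | S'.val v = 1} with hNdef
    have hNsub : N ⊆ V := fun v hv => hv.1
    have hNthin : ∀ n ∈ N, S'.val n = 1 := fun n hn => hn.2
    have hNgood : S'.GoodClosed N := by
      refine ⟨fun v hv => hV.1 hv.1, ⟨hV.2.1, (S'.diag_thin hp).2⟩, ?_, ?_⟩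
      · rintro t ⟨htV, ht1⟩
        exact ⟨hV.2.2.1 t htV, (S'.transp_thin hp ⟨hV.1 htV, ht1⟩).2⟩
      · rintro u ⟨huV, hu1⟩ v ⟨hvV, hv1⟩ w hw
        refine ⟨hV.2.2.2 u huV v hvV hw, ?_⟩
        have hsing := (S'.rcomp_thin hp (hV.1 huV) ⟨hV.1 hvV, hv1⟩).2
        rw [hsing] at hw
        rw [(hw : w = rcomp u v)]
        exact (S'.rcomp_thin_thin hp ⟨hV.1 huV, hu1⟩ ⟨hV.1 hvV, hv1⟩).2
    by_cases hVN : V ⊆ N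
    · -- V is thin: take U = {1}
      refine ⟨{schemeDiag X'}, S'.good_singleton_diag hp, ?_, ?_, ?_⟩
      · exact Set.singleton_subset_iff.mpr hV.2.1
      · intro he
        have h1 := S'.nOrd_singleton_diag hp
        rw [he] at h1
        omega
      · intro v hv w hw
        have hvthin : S'.IsThin v := ⟨hV.1 hv, (hVN hv).2⟩
        have hsing := (S'.rcomp_thin hp (S'.transpose_mem v (hV.1 hv)) hvthin).2
        rw [hsing] at hw
        have hw' : w = rcomp (schemeTransp v) v := hw
        rw [hw', S'.rcomp_transp_self hp hvthin]
        rfl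
    · obtain ⟨v₀, hv₀V, hv₀N⟩ := Set.not_subset.mp hVN
      -- mod-p counting: the thin radical of V is nontrivial
      obtain ⟨m, hm⟩ := S'.nOrd_pow hp hV
      have hm1 : 1 ≤ m := by
        rcases Nat.eq_zero_or_pos m with h0 | h1
        · rw [h0, pow_zero] at hm; omega
        · exact h1
      have hpdvd : p ∣ S'.nOrd V := by
        rw [hm]
        exact dvd_pow_self p (by omega)
      set VF := (Set.toFinite V).toFinset with hVF
      set NFin := (Set.toFinite N).toFinset with hNFin
      have hNsubF : NFin ⊆ VF := by
        intro v hv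
        rw [hNFin, Set.Finite.mem_toFinset] at hv
        rw [hVF, Set.Finite.mem_toFinset]
        exact hNsub hv
      have hsplit : S'.nOrd V = ∑ v ∈ VF \ NFin, S'.val v + ∑ v ∈ NFin, S'.val v := by
        rw [nOrd_eq_sum, ← Finset.sum_sdiff hNsubF]
      have hthin_sum : ∑ v ∈ NFin, S'.val v = NFin.card := by
        have h1 : ∀ v ∈ NFin, S'.val v = 1 := by
          intro v hv
          rw [hNFin, Set.Finite.mem_toFinset] at hv
          exact hNthin v hv
        calc ∑ v ∈ NFin, S'.val v = ∑ _v ∈ NFin, 1 := Finset.sum_congr rfl h1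
          _ = NFin.card := by rw [Finset.sum_const, smul_eq_mul, mul_one]
      have hnon_dvd : p ∣ ∑ v ∈ VF \ NFin, S'.val v := by
        apply Finset.dvd_sum
        intro v hv
        rw [Finset.mem_sdiff, hVF, hNFin, Set.Finite.mem_toFinset,
          Set.Finite.mem_toFinset] at hv
        obtain ⟨i, hi⟩ := hp.2.2 v (hV.1 hv.1)
        have hine : i ≠ 0 := by
          intro h0
          rw [h0, pow_zero] at hi
          exact hv.2 ⟨hv.1, hi⟩
        rw [hi]
        exact dvd_pow_self p hine
      have hcard_dvd : p ∣ NFin.card := by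
        have he : NFin.card = S'.nOrd V - ∑ v ∈ VF \ NFin, S'.val v := by omega
        rw [he]
        exact Nat.dvd_sub hpdvd hnon_dvd
      have hdiagN : schemeDiag X' ∈ NFin := by
        rw [hNFin, Set.Finite.mem_toFinset]
        exact ⟨hV.2.1, (S'.diag_thin hp).2⟩
      have hNpos : 0 < NFin.card := Finset.card_pos.mpr ⟨_, hdiagN⟩
      have hcard2 : 2 ≤ NFin.card := le_trans hp.1.two_le (Nat.le_of_dvd hNpos hcard_dvd)
      have hNord : S'.nOrd N = NFin.card := by
        rw [nOrd_eq_sum, ← hNFin, hthin_sum]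
      have hN2 : 2 ≤ S'.nOrd N := by omega
      -- pass to the quotient scheme
      letI : Fintype (Quotient (S'.csetoid N hNgood)) := Fintype.ofFinite _
      have hp2 := S'.qscheme_pscheme hNgood hp hcomm hNthin
      have hcomm2 := S'.qscheme_comm hNgood hp hcomm hNthin
      have hV2good := S'.qgood hNgood hp hcomm hNthin hV
      have hnOrdeq := S'.qnOrd hNgood hp hcomm hNthin hV hNsub
      haveI : Nonempty X' := S'.nonempty_of_pscheme hp
      haveI : Nonempty (Quotient (S'.csetoid N hNgood)) :=
        ⟨Quotient.mk _ (Classical.arbitrary X')⟩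
      have hYpos : 0 < Nat.card (Quotient (S'.csetoid N hNgood)) := Nat.card_pos
      have hYcard : Nat.card (Quotient (S'.csetoid N hNgood)) ≤ k := by
        have hmul := S'.card_eq_nOrd_mul hNgood
        have h2 : 2 * Nat.card (Quotient (S'.csetoid N hNgood)) ≤ Nat.card X' := by
          rw [hmul]
          exact Nat.mul_le_mul_right _ hN2
        omega
      have hV2n : 1 < (S'.qscheme hNgood hp hcomm hNthin).nOrd
          ((fun v => S'.qrel hNgood v) '' V) := by
        by_contra hcon
        have hpos2 := (S'.qscheme hNgood hp hcomm hNthin).nOrd_pos hp2 hV2good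
        have h1 : (S'.qscheme hNgood hp hcomm hNthin).nOrd
            ((fun v => S'.qrel hNgood v) '' V) = 1 := by omega
        rw [h1, mul_one] at hnOrdeq
        have hlt := S'.nOrd_lt hp hNsub hV.1 hv₀V hv₀N
        omega
      obtain ⟨U2, hU2good, hU2sub, hU2ne, hU2sq⟩ := ih (S'.qscheme hNgood hp hcomm hNthin) p
        hYcard hp2 hcomm2 _ hV2good hV2n
      refine ⟨{v ∈ V | S'.qrel hNgood v ∈ U2}, ?_, fun v hv => hv.1, ?_, ?_⟩
      · refine ⟨fun v hv => hV.1 hv.1, ⟨hV.2.1, ?_⟩, ?_, ?_⟩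
        · rw [S'.qrel_diag hNgood]
          exact hU2good.2.1
        · rintro t ⟨htV, htU⟩
          refine ⟨hV.2.2.1 t htV, ?_⟩
          rw [← S'.qrel_transp hNgood hp hcomm hNthin (hV.1 htV)]
          exact hU2good.2.2.1 _ htU
        · rintro u ⟨huV, huU⟩ v ⟨hvV, hvU⟩ w hw
          refine ⟨hV.2.2.2 u huV v hvV hw, ?_⟩
          exact hU2good.2.2.2 _ huU _ hvU
            (S'.qrel_mem_cprod_lift hNgood hp hcomm hNthin (hV.1 huV) (hV.1 hvV) hw)
      · intro he
        apply hU2ne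
        apply Set.Subset.antisymm hU2sub
        rintro A ⟨v, hvV, rfl⟩
        have hmem : v ∈ {v ∈ V | S'.qrel hNgood v ∈ U2} := by rw [he]; exact hvV
        exact hmem.2
      · intro v hvV w hw
        have hwV : w ∈ V := hV.2.2.2 _ (hV.2.2.1 v hvV) _ hvV hw
        refine ⟨hwV, ?_⟩
        have hlift := S'.qrel_mem_cprod_lift hNgood hp hcomm hNthin
          (S'.transpose_mem v (hV.1 hvV)) (hV.1 hvV) hw
        rw [← S'.qrel_transp hNgood hp hcomm hNthin (hV.1 hvV)] at hlift
        exact hU2sq (S'.qrel hNgood v) ⟨v, hvV, rfl⟩ hlift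

end Dev

end AssocScheme

/-- for a commutative p-scheme of order `p^4` with `n_{O_θ(S)} = p^2`
and `n_{O^θ(S)} = p^3`, the thin radical is contained in the thin residue. -/
theorem stmt12 {X : Type*} [Fintype X] (S : AssocScheme X) (p : ℕ)
    (hp : S.IsPScheme p) (hcomm : S.IsCommutative)
    (hcard : Fintype.card X = p ^ 4)
    (hrad : S.nOrd S.thinRadical = p ^ 2)
    (hres : S.nOrd S.thinResidue = p ^ 3) :
    S.thinRadical ⊆ S.thinResidue := by
  intro s hs
  by_contra hsT
  have hsthin : S.IsThin s := ⟨hs.1, hs.2⟩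
  have hTgood := S.thinResidue_good hp
  have hmul := S.card_eq_nOrd_mul hTgood
  have hQ : Nat.card (Quotient (S.csetoid S.thinResidue hTgood)) = p := by
    rw [Nat.card_eq_fintype_card, hcard, hres] at hmul
    have h4 : p ^ 4 = p ^ 3 * p := by ring
    rw [h4] at hmul
    exact (Nat.eq_of_mul_eq_mul_left (pow_pos hp.1.pos 3) hmul.symm)
  have hsub := S.thinResidue_subset_resOf_self hp hcomm hsthin hsT hQ
  obtain ⟨U, hUgood, hUsub, hUne, hUsq⟩ := AssocScheme.lemJ (Nat.card X) S p le_rfl hp hcomm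
    S.thinResidue hTgood (by
      rw [hres]
      exact Nat.one_lt_pow (by omega) hp.1.one_lt)
  have hUfam : U ∈ {U | S.IsClosedSubset U ∧
      ∀ t ∈ S.thinResidue, S.cprod (schemeTransp t) t ⊆ U} :=
    ⟨hUgood.isClosedSubset, hUsq⟩
  have h1 : S.resOf S.thinResidue ⊆ U := Set.sInter_subset_of_mem hUfam
  have h2 : S.thinResidue ⊆ U := le_trans hsub h1
  exact hUne (Set.Subset.antisymm hUsub h2)
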